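/- arXiv:1312.6432 — 3 statements merged into one kernel-verified Lean document; each statement's English description precedes it below -/
import Mathlib

section
/- In the Metropolis-within-Gibbs setting, define ϱ := inf over f ∈ L²(X,π_X) with ∫_Θ var_{ξ(θ,·)}(f) π_Θ(dθ) > 0 of the ratio [∫_Θ var_{ξ(θ,·)}(f) Gap(Π_θ) π_Θ(dθ)] / [∫_Θ var_{ξ(θ,·)}(f) π_Θ(dθ)]. Then for every f ∈ L²(X,π_X): 0 ≤ (var(f,Γ_x) − var_{π_X}(f))/2 ≤ var(f,Φ_x), and if ϱ > 0 then var(f,Φ_x) ≤ (ϱ^{−1} − 1) var_{π_X}(f) + ϱ^{−1} var(f,Γ_x). -/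
open MeasureTheory ProbabilityTheory
open scoped ENNReal

/-- The Dirichlet form `E_K(f) = ∫ f (f - Kf) dμ` of a Markov transition `K`. -/
noncomputable def dform {α : Type*} [MeasurableSpace α]
    (μ : Measure α) (K : α → Measure α) (f : α → ℝ) : ℝ :=
  ∫ x, f x * (f x - ∫ y, f y ∂(K x)) ∂μ

/-- The variance of `f` under `μ`: `var_μ(f) = μ(f²) - μ(f)²`. -/
noncomputable def varF {α : Type*} [MeasurableSpace α] (μ : Measure α) (f : α → ℝ) : ℝ :=
  (∫ x, f x ^ 2 ∂μ) - (∫ x, f x ∂μ) ^ 2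

/-- The right spectral gap `Gap(K) = inf {E_K(f)/var_μ(f) : f ∈ L²(μ), var_μ(f) > 0}`. -/
noncomputable def gapR {α : Type*} [MeasurableSpace α]
    (μ : Measure α) (K : α → Measure α) : ℝ :=
  sInf {r : ℝ | ∃ f : α → ℝ, MemLp f 2 μ ∧ 0 < varF μ f ∧ r = dform μ K f / varF μ f}

/-- The asymptotic variance of `f` for a `μ`-reversible kernel `K`, via the variational
representation `var(f, K) = 2 sup_{g ∈ L²₀(μ)} [2⟨f - μ(f), g⟩_μ - E_K(g)] - var_μ(f)`,
valued in the extended reals. -/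
noncomputable def avarE {α : Type*} [MeasurableSpace α]
    (μ : Measure α) (K : α → Measure α) (f : α → ℝ) : EReal :=
  2 * sSup {r : EReal | ∃ g : α → ℝ, MemLp g 2 μ ∧ (∫ x, g x ∂μ) = 0 ∧
      r = ((2 * (∫ x, (f x - ∫ t, f t ∂μ) * g x ∂μ) - dform μ K g : ℝ) : EReal)}
    - ((varF μ f : ℝ) : EReal)

variable {Θ X : Type*} [MeasurableSpace Θ] [MeasurableSpace X]

/-- The `X`-marginal Metropolis-within-Gibbs kernel
`Φ_x(x₀, S) = ∫_Θ Π_θ(x₀, S) η(x₀, dθ)`. -/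
noncomputable def PhiX (η : Kernel X Θ) (Pk : Kernel (Θ × X) X) (x₀ : X) : Measure X :=
  (η x₀).bind (fun θ => Pk (θ, x₀))

/-- The `X`-marginal Gibbs kernel `Γ_x(x₀, S) = ∫_Θ ξ(θ, S) η(x₀, dθ)`. -/
noncomputable def GammaX (η : Kernel X Θ) (ξ : Kernel Θ X) (x₀ : X) : Measure X :=
  (η x₀).bind (fun θ => ξ θ)

/-- The constant `ϱ`, an infimum over `f ∈ L²(X, π_X)` of the ratio
`∫ var_{ξ(θ,·)}(f) Gap(Π_θ) π_Θ(dθ) / ∫ var_{ξ(θ,·)}(f) π_Θ(dθ)`. -/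
noncomputable def mwgRho (π : Measure (Θ × X)) (ξ : Kernel Θ X)
    (Pk : Kernel (Θ × X) X) : ℝ :=
  sInf {r : ℝ | ∃ f : X → ℝ, MemLp f 2 π.snd ∧
    0 < (∫ θ, varF (ξ θ) f ∂π.fst) ∧
    r = (∫ θ, varF (ξ θ) f * gapR (ξ θ) (fun x => Pk (θ, x)) ∂π.fst) /
        (∫ θ, varF (ξ θ) f ∂π.fst)}

section Helpers

variable {α : Type*} [MeasurableSpace α] {μ : Measure α}

private lemma aux_int_of_lint {h : α → ℝ} (hm : Measurable h) (h0 : ∀ x, 0 ≤ h x)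
    (hfin : ∫⁻ x, ENNReal.ofReal (h x) ∂μ ≠ ⊤) : Integrable h μ := by
  refine ⟨hm.aestronglyMeasurable, ?_⟩
  rw [hasFiniteIntegral_iff_ofReal (Filter.Eventually.of_forall h0)]
  exact lt_top_iff_ne_top.2 hfin

private lemma aux_lint_of_int {h : α → ℝ} (hi : Integrable h μ) (h0 : ∀ x, 0 ≤ h x) :
    ∫⁻ x, ENNReal.ofReal (h x) ∂μ ≠ ⊤ := by
  rw [← ofReal_integral_eq_lintegral_ofReal hi (Filter.Eventually.of_forall h0)]
  exact ENNReal.ofReal_ne_top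

private lemma aux_memLp_two {g : α → ℝ} (hg : Measurable g)
    (hfin : ∫⁻ x, ENNReal.ofReal (g x ^ 2) ∂μ ≠ ⊤) : MemLp g 2 μ :=
  (memLp_two_iff_integrable_sq hg.aestronglyMeasurable).2
    (aux_int_of_lint (hg.pow_const 2) (fun x => sq_nonneg _) hfin)

private lemma aux_lint_sq {g : α → ℝ} (hg2 : MemLp g 2 μ) :
    ∫⁻ x, ENNReal.ofReal (g x ^ 2) ∂μ ≠ ⊤ :=
  aux_lint_of_int hg2.integrable_sq (fun x => sq_nonneg _)

private lemma aux_jensen [IsProbabilityMeasure μ] {g : α → ℝ} (hg2 : MemLp g 2 μ) :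
    (∫ x, g x ∂μ) ^ 2 ≤ ∫ x, g x ^ 2 ∂μ := by
  have h := variance_nonneg g μ
  rw [variance_eq_sub hg2] at h
  simp only [Pi.pow_apply] at h
  linarith

private lemma aux_varF_eq_variance [IsProbabilityMeasure μ] {g : α → ℝ} (hg2 : MemLp g 2 μ) :
    varF μ g = variance g μ := by
  rw [variance_eq_sub hg2]; simp only [Pi.pow_apply]; rfl

private lemma aux_varF_nonneg [IsProbabilityMeasure μ] {g : α → ℝ} (hg2 : MemLp g 2 μ) :
    0 ≤ varF μ g := by
  rw [aux_varF_eq_variance hg2]; exact variance_nonneg g μ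

private lemma aux_abs_mul_le (a b : ℝ) : ‖a * b‖ ≤ (a ^ 2 + b ^ 2) / 2 := by
  rw [Real.norm_eq_abs, abs_mul]
  nlinarith [sq_nonneg (|a| - |b|), sq_abs a, sq_abs b, abs_nonneg a, abs_nonneg b]

end Helpers

section BindLemmas

variable {α β : Type*} [MeasurableSpace α] [MeasurableSpace β]

private lemma aux_bind_eq (m : Measure α) [SFinite m] (κ : Kernel α β) [IsSFiniteKernel κ] :
    m.bind (fun a => κ a) = (m ⊗ₘ κ).map Prod.snd := by
  ext s hs
  rw [Measure.bind_apply hs (Kernel.measurable κ).aemeasurable, Measure.map_apply measurable_snd hs,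
    Measure.compProd_apply (measurable_snd hs)]
  rfl

private lemma aux_integral_bind (m : Measure α) [SFinite m] (κ : Kernel α β) [IsSFiniteKernel κ]
    {g : β → ℝ} (hg : Measurable g) (hint : Integrable (fun p : α × β => g p.2) (m ⊗ₘ κ)) :
    ∫ y, g y ∂(m.bind (fun a => κ a)) = ∫ a, ∫ y, g y ∂κ a ∂m := by
  rw [aux_bind_eq m κ, integral_map measurable_snd.aemeasurable hg.aestronglyMeasurable]
  exact Measure.integral_compProd hint

private lemma aux_lintegral_bind (m : Measure α) [SFinite m] (κ : Kernel α β) [IsSFiniteKernel κ]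
    {g : β → ℝ≥0∞} (hg : Measurable g) :
    ∫⁻ y, g y ∂(m.bind (fun a => κ a)) = ∫⁻ a, ∫⁻ y, g y ∂κ a ∂m := by
  rw [aux_bind_eq m κ, lintegral_map hg measurable_snd]
  exact Measure.lintegral_compProd (hg.comp measurable_snd)

end BindLemmas

section PerTheta

variable {Y : Type*} [MeasurableSpace Y] {μ : Measure Y} [IsProbabilityMeasure μ]
  {P : Kernel Y Y} [IsMarkovKernel P]

private lemma aux_symm
    (hrev : ∀ A B : Set Y, MeasurableSet A → MeasurableSet B →
      ∫⁻ x in A, P x B ∂μ = ∫⁻ x in B, P x A ∂μ) :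
    (μ ⊗ₘ P).map Prod.swap = μ ⊗ₘ P := by
  haveI : IsProbabilityMeasure ((μ ⊗ₘ P).map Prod.swap) :=
    Measure.isProbabilityMeasure_map measurable_swap.aemeasurable
  refine ext_of_generate_finite _ generateFrom_prod.symm isPiSystem_prod ?_ ?_
  · rintro s ⟨A, hA, B, hB, rfl⟩
    rw [Measure.map_apply measurable_swap ((hA : MeasurableSet A).prod hB),
      Set.preimage_swap_prod, Measure.compProd_apply_prod hB hA,
      Measure.compProd_apply_prod hA hB, hrev B A hB hA]
  · simp [measure_univ]

private lemma aux_lint_inv (hsym : (μ ⊗ₘ P).map Prod.swap = μ ⊗ₘ P)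
    {h : Y → ℝ≥0∞} (hh : Measurable h) :
    ∫⁻ x, ∫⁻ y, h y ∂P x ∂μ = ∫⁻ x, h x ∂μ := by
  have h1 : ∫⁻ p : Y × Y, h p.2 ∂(μ ⊗ₘ P) = ∫⁻ x, ∫⁻ y, h y ∂P x ∂μ :=
    Measure.lintegral_compProd (hh.comp measurable_snd)
  have h2 : ∫⁻ p : Y × Y, h p.2 ∂(μ ⊗ₘ P) = ∫⁻ p : Y × Y, h p.1 ∂(μ ⊗ₘ P) := by
    conv_lhs => rw [← hsym]
    rw [lintegral_map (show Measurable fun p : Y × Y => h p.2 from hh.comp measurable_snd)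
      measurable_swap]
    rfl
  have h3 : ∫⁻ p : Y × Y, h p.1 ∂(μ ⊗ₘ P) = ∫⁻ x, h x ∂μ := by
    rw [Measure.lintegral_compProd (show Measurable fun p : Y × Y => h p.1 from
      hh.comp measurable_fst)]
    simp
  rw [← h1, h2, h3]

private lemma aux_int_swap (hsym : (μ ⊗ₘ P).map Prod.swap = μ ⊗ₘ P)
    {F : Y × Y → ℝ} (hF : AEStronglyMeasurable F (μ ⊗ₘ P)) :
    ∫ p, F p ∂(μ ⊗ₘ P) = ∫ p, F p.swap ∂(μ ⊗ₘ P) := by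
  conv_lhs => rw [← hsym]
  exact integral_map measurable_swap.aemeasurable (by rwa [hsym])

end PerTheta

section PerTheta2

variable {Y : Type*} [MeasurableSpace Y] {μ : Measure Y} [IsProbabilityMeasure μ]
  {P : Kernel Y Y} [IsMarkovKernel P]

private lemma aux_dformA (hsym : (μ ⊗ₘ P).map Prod.swap = μ ⊗ₘ P)
    {g : Y → ℝ} (hg : Measurable g) (hg2 : MemLp g 2 μ) :
    Integrable (fun x => g x * ∫ y, g y ∂P x) μ ∧
    Integrable (fun x => ∫ y, g y ∂P x) μ ∧
    (∀ᵐ x ∂μ, MemLp g 2 (P x)) ∧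
    dform μ (fun x => P x) g = (∫ x, g x ^ 2 ∂μ) - ∫ x, g x * ∫ y, g y ∂P x ∂μ ∧
    |∫ x, g x * ∫ y, g y ∂P x ∂μ| ≤ ∫ x, g x ^ 2 ∂μ ∧
    ∫ x, (∫ y, g y ∂P x) ∂μ = ∫ x, g x ∂μ := by
  have hB : Measurable fun y => ENNReal.ofReal (g y ^ 2) := (hg.pow_const 2).ennreal_ofReal
  have hfin : ∫⁻ y, ENNReal.ofReal (g y ^ 2) ∂μ ≠ ⊤ := aux_lint_sq hg2
  have hPmeas : Measurable fun x => ∫⁻ y, ENNReal.ofReal (g y ^ 2) ∂P x :=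
    Measurable.lintegral_kernel_prod_right
      (show Measurable (Function.uncurry fun _ y => ENNReal.ofReal (g y ^ 2)) from
        hB.comp measurable_snd)
  have hPfin : ∀ᵐ x ∂μ, ∫⁻ y, ENNReal.ofReal (g y ^ 2) ∂P x ≠ ⊤ := by
    have hI : ∫⁻ x, (∫⁻ y, ENNReal.ofReal (g y ^ 2) ∂P x) ∂μ ≠ ⊤ := by
      rw [aux_lint_inv hsym hB]; exact hfin
    exact (ae_lt_top hPmeas hI).mono fun x hx => hx.ne
  have hPL2 : ∀ᵐ x ∂μ, MemLp g 2 (P x) := hPfin.mono fun x hx => aux_memLp_two hg hx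
  have hPJen : ∀ᵐ x ∂μ, (∫ y, g y ∂P x) ^ 2 ≤ ∫ y, g y ^ 2 ∂P x :=
    hPL2.mono fun x hx => aux_jensen hx
  have hq_meas : Measurable fun x => ∫ y, g y ^ 2 ∂P x :=
    (((hg.comp measurable_snd).pow_const 2).stronglyMeasurable
      (f := fun p : Y × Y => g p.2 ^ 2)).integral_kernel_prod_right'.measurable
  have hq0 : ∀ x, 0 ≤ ∫ y, g y ^ 2 ∂P x := fun x => integral_nonneg fun y => sq_nonneg _
  have hq_lint : ∫⁻ x, ENNReal.ofReal (∫ y, g y ^ 2 ∂P x) ∂μ ≠ ⊤ := by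
    have he : ∀ᵐ x ∂μ,
        ENNReal.ofReal (∫ y, g y ^ 2 ∂P x) = ∫⁻ y, ENNReal.ofReal (g y ^ 2) ∂P x :=
      hPL2.mono fun x hx => ofReal_integral_eq_lintegral_ofReal hx.integrable_sq
        (Filter.Eventually.of_forall fun y => sq_nonneg _)
    rw [lintegral_congr_ae he, aux_lint_inv hsym hB]; exact hfin
  have hq_int : Integrable (fun x => ∫ y, g y ^ 2 ∂P x) μ := aux_int_of_lint hq_meas hq0 hq_lint
  have hPg_meas : Measurable fun x => ∫ y, g y ∂P x :=
    ((hg.comp measurable_snd).stronglyMeasurable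
      (f := fun p : Y × Y => g p.2)).integral_kernel_prod_right'.measurable
  have hcomp1 : ∫⁻ p : Y × Y, ENNReal.ofReal (g p.1 ^ 2) ∂(μ ⊗ₘ P)
      = ∫⁻ x, ENNReal.ofReal (g x ^ 2) ∂μ := by
    rw [Measure.lintegral_compProd (show Measurable fun p : Y × Y => ENNReal.ofReal (g p.1 ^ 2)
      from hB.comp measurable_fst)]
    simp
  have hcomp2 : ∫⁻ p : Y × Y, ENNReal.ofReal (g p.2 ^ 2) ∂(μ ⊗ₘ P)
      = ∫⁻ x, ENNReal.ofReal (g x ^ 2) ∂μ := by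
    rw [Measure.lintegral_compProd (show Measurable fun p : Y × Y => ENNReal.ofReal (g p.2 ^ 2)
      from hB.comp measurable_snd)]
    exact aux_lint_inv hsym hB
  have hν1 : Integrable (fun p : Y × Y => g p.1 ^ 2) (μ ⊗ₘ P) :=
    aux_int_of_lint ((hg.comp measurable_fst).pow_const 2) (fun p => sq_nonneg _)
      (by rw [hcomp1]; exact hfin)
  have hν2 : Integrable (fun p : Y × Y => g p.2 ^ 2) (μ ⊗ₘ P) :=
    aux_int_of_lint ((hg.comp measurable_snd).pow_const 2) (fun p => sq_nonneg _)
      (by rw [hcomp2]; exact hfin)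
  have hν12 : Integrable (fun p : Y × Y => g p.1 * g p.2) (μ ⊗ₘ P) :=
    Integrable.mono' ((hν1.add hν2).div_const 2)
      ((hg.comp measurable_fst).mul (hg.comp measurable_snd)).aestronglyMeasurable
      (Filter.Eventually.of_forall fun p => aux_abs_mul_le _ _)
  have hνs1 : Integrable (fun p : Y × Y => g p.1) (μ ⊗ₘ P) :=
    (aux_memLp_two (show Measurable fun p : Y × Y => g p.1 from hg.comp measurable_fst)
      (by rw [hcomp1]; exact hfin)).integrable one_le_two
  have hνs2 : Integrable (fun p : Y × Y => g p.2) (μ ⊗ₘ P) :=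
    (aux_memLp_two (show Measurable fun p : Y × Y => g p.2 from hg.comp measurable_snd)
      (by rw [hcomp2]; exact hfin)).integrable one_le_two
  have hprod : ∫ p : Y × Y, g p.1 * g p.2 ∂(μ ⊗ₘ P) = ∫ x, g x * ∫ y, g y ∂P x ∂μ := by
    rw [Measure.integral_compProd hν12]
    simp_rw [integral_const_mul]
  have hmain_int : Integrable (fun x => g x * ∫ y, g y ∂P x) μ := by
    refine Integrable.mono' ((hg2.integrable_sq.add hq_int).div_const 2)
      (hg.mul hPg_meas).aestronglyMeasurable ?_
    refine hPJen.mono fun x hx => ?_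
    calc ‖g x * ∫ y, g y ∂P x‖ ≤ (g x ^ 2 + (∫ y, g y ∂P x) ^ 2) / 2 := aux_abs_mul_le _ _
    _ ≤ (g x ^ 2 + ∫ y, g y ^ 2 ∂P x) / 2 := by linarith
  have hPg_int : Integrable (fun x => ∫ y, g y ∂P x) μ := by
    refine Integrable.mono' (((integrable_const (1 : ℝ)).add hq_int).div_const 2)
      hPg_meas.aestronglyMeasurable ?_
    refine hPJen.mono fun x hx => ?_
    have h1 : ‖∫ y, g y ∂P x‖ ≤ (1 + (∫ y, g y ∂P x) ^ 2) / 2 := by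
      rw [Real.norm_eq_abs]
      nlinarith [sq_nonneg (|∫ y, g y ∂P x| - 1), sq_abs (∫ y, g y ∂P x)]
    calc ‖∫ y, g y ∂P x‖ ≤ (1 + (∫ y, g y ∂P x) ^ 2) / 2 := h1
    _ ≤ (1 + ∫ y, g y ^ 2 ∂P x) / 2 := by linarith
  have hform : dform μ (fun x => P x) g
      = (∫ x, g x ^ 2 ∂μ) - ∫ x, g x * ∫ y, g y ∂P x ∂μ := by
    have h0 : dform μ (fun x => P x) g = ∫ x, (g x ^ 2 - g x * ∫ y, g y ∂P x) ∂μ := by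
      unfold dform
      exact integral_congr_ae (Filter.Eventually.of_forall fun x => by ring)
    rw [h0, integral_sub hg2.integrable_sq hmain_int]
  have hhalf : ∫ p : Y × Y, (g p.1 ^ 2 + g p.2 ^ 2) / 2 ∂(μ ⊗ₘ P) = ∫ x, g x ^ 2 ∂μ := by
    have e1 : ∫ p : Y × Y, g p.1 ^ 2 ∂(μ ⊗ₘ P) = ∫ x, g x ^ 2 ∂μ := by
      rw [Measure.integral_compProd hν1]; simp
    have e2 : ∫ p : Y × Y, g p.2 ^ 2 ∂(μ ⊗ₘ P) = ∫ x, g x ^ 2 ∂μ := by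
      rw [aux_int_swap hsym hν2.1]; exact e1
    rw [integral_div, integral_add hν1 hν2, e1, e2]; ring
  have habs : |∫ x, g x * ∫ y, g y ∂P x ∂μ| ≤ ∫ x, g x ^ 2 ∂μ := by
    rw [← hprod]
    have hup : ∫ p : Y × Y, g p.1 * g p.2 ∂(μ ⊗ₘ P)
        ≤ ∫ p : Y × Y, (g p.1 ^ 2 + g p.2 ^ 2) / 2 ∂(μ ⊗ₘ P) :=
      integral_mono hν12 ((hν1.add hν2).div_const 2)
        (fun p => by nlinarith [sq_nonneg (g p.1 - g p.2)])
    have hlo : ∫ p : Y × Y, -((g p.1 ^ 2 + g p.2 ^ 2) / 2) ∂(μ ⊗ₘ P)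
        ≤ ∫ p : Y × Y, g p.1 * g p.2 ∂(μ ⊗ₘ P) :=
      integral_mono ((hν1.add hν2).div_const 2).neg hν12
        (fun p => by nlinarith [sq_nonneg (g p.1 + g p.2)])
    rw [integral_neg, hhalf] at hlo
    rw [hhalf] at hup
    rw [abs_le]; exact ⟨hlo, hup⟩
  have hmean : ∫ x, (∫ y, g y ∂P x) ∂μ = ∫ x, g x ∂μ := by
    have e0 : ∫ p : Y × Y, g p.2 ∂(μ ⊗ₘ P) = ∫ x, ∫ y, g y ∂P x ∂μ :=
      Measure.integral_compProd hνs2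
    have e1 : ∫ p : Y × Y, g p.2 ∂(μ ⊗ₘ P) = ∫ p : Y × Y, g p.1 ∂(μ ⊗ₘ P) := by
      rw [aux_int_swap hsym hνs2.1]
      rfl
    have e2 : ∫ p : Y × Y, g p.1 ∂(μ ⊗ₘ P) = ∫ x, g x ∂μ := by
      rw [Measure.integral_compProd hνs1]; simp
    rw [← e0, e1, e2]
  exact ⟨hmain_int, hPg_int, hPL2, hform, habs, hmean⟩

private lemma aux_dform_nonneg (hsym : (μ ⊗ₘ P).map Prod.swap = μ ⊗ₘ P)
    {g : Y → ℝ} (hg : Measurable g) (hg2 : MemLp g 2 μ) :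
    0 ≤ dform μ (fun x => P x) g := by
  obtain ⟨_, _, _, hform, habs, _⟩ := aux_dformA hsym hg hg2
  rw [hform]
  have := (abs_le.1 habs).2
  linarith

private lemma aux_dform_le (hsym : (μ ⊗ₘ P).map Prod.swap = μ ⊗ₘ P)
    {g : Y → ℝ} (hg : Measurable g) (hg2 : MemLp g 2 μ) :
    dform μ (fun x => P x) g ≤ 2 * varF μ g := by
  obtain ⟨hgi, hPgi, hPL2, hform, _, hmean⟩ := aux_dformA hsym hg hg2
  set c := ∫ x, g x ∂μ with hc
  set h : Y → ℝ := fun x => g x - c with hhdef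
  have hhm : Measurable h := hg.sub measurable_const
  have hh2 : MemLp h 2 μ := hg2.sub (memLp_const c)
  obtain ⟨hhi, hPhi, _, hformh, habsh, _⟩ := aux_dformA hsym hhm hh2
  have hgint : Integrable g μ := hg2.integrable one_le_two
  have hsq : ∫ x, h x ^ 2 ∂μ = ∫ x, g x ^ 2 ∂μ - c ^ 2 := by
    calc ∫ x, h x ^ 2 ∂μ = ∫ x, (g x ^ 2 - (2 * c) * g x + c ^ 2) ∂μ :=
        integral_congr_ae (Filter.Eventually.of_forall fun x => by simp only [hhdef]; ring)
    _ = ∫ x, (g x ^ 2 - (2 * c) * g x) ∂μ + ∫ _x, (c ^ 2 : ℝ) ∂μ :=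
        integral_add (hg2.integrable_sq.sub (hgint.const_mul _)) (integrable_const _)
    _ = (∫ x, g x ^ 2 ∂μ - ∫ x, (2 * c) * g x ∂μ) + c ^ 2 := by
        rw [integral_sub hg2.integrable_sq (hgint.const_mul _)]; simp
    _ = ∫ x, g x ^ 2 ∂μ - c ^ 2 := by rw [integral_const_mul, ← hc]; ring
  have hPh : ∀ᵐ x ∂μ, ∫ y, h y ∂P x = (∫ y, g y ∂P x) - c := by
    refine hPL2.mono fun x hx => ?_
    simp only [hhdef]
    rw [integral_sub (hx.integrable one_le_two) (integrable_const c)]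
    simp
  have hcross : ∫ x, h x * ∫ y, h y ∂P x ∂μ = ∫ x, g x * ∫ y, g y ∂P x ∂μ - c ^ 2 := by
    have e : ∀ᵐ x ∂μ, h x * ∫ y, h y ∂P x
        = g x * ∫ y, g y ∂P x - c * g x - c * (∫ y, g y ∂P x) + c ^ 2 :=
      hPh.mono fun x hx => by simp only [hhdef]; rw [hx]; ring
    rw [integral_congr_ae e]
    have i1 : Integrable (fun x => g x * ∫ y, g y ∂P x - c * g x) μ :=
      hgi.sub (hgint.const_mul c)
    have i2 : Integrable (fun x => g x * ∫ y, g y ∂P x - c * g x - c * ∫ y, g y ∂P x) μ :=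
      i1.sub (hPgi.const_mul c)
    rw [integral_add i2 (integrable_const _), integral_sub i1 (hPgi.const_mul c),
      integral_sub hgi (hgint.const_mul c), integral_const_mul, integral_const_mul, hmean, ← hc]
    simp
    ring
  have heq : dform μ (fun x => P x) g = dform μ (fun x => P x) h := by
    rw [hform, hformh, hsq, hcross]; ring
  have hvar : varF μ g = ∫ x, h x ^ 2 ∂μ := by
    rw [hsq]; unfold varF; rw [← hc]
  rw [heq, hformh, hvar]
  have := (abs_le.1 habsh).1
  linarith

private lemma aux_null_P
    (hrev : ∀ A B : Set Y, MeasurableSet A → MeasurableSet B →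
      ∫⁻ x in A, P x B ∂μ = ∫⁻ x in B, P x A ∂μ)
    {N : Set Y} (hN : MeasurableSet N) (h0 : μ N = 0) :
    ∀ᵐ x ∂μ, P x N = 0 := by
  have h1 : ∫⁻ x, P x N ∂μ = 0 := by
    have h2 := hrev Set.univ N MeasurableSet.univ hN
    rw [Measure.restrict_univ] at h2
    rw [h2]
    calc ∫⁻ x in N, P x Set.univ ∂μ = ∫⁻ _x in N, 1 ∂μ := by simp
    _ = μ N := by simp
    _ = 0 := h0
  have h3 := (lintegral_eq_zero_iff (Kernel.measurable_coe P hN)).1 h1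
  filter_upwards [h3] with x hx using hx

end PerTheta2

section CongrLemmas

variable {Y : Type*} [MeasurableSpace Y] {μ : Measure Y}

private lemma aux_dform_congr {K : Y → Measure Y}
    (hK : ∀ N : Set Y, MeasurableSet N → μ N = 0 → ∀ᵐ x ∂μ, K x N = 0)
    {g g' : Y → ℝ} (hgg' : g =ᵐ[μ] g') : dform μ K g = dform μ K g' := by
  have hnull : μ {x | g x ≠ g' x} = 0 := by
    have := hgg'
    rwa [Filter.EventuallyEq, ae_iff] at this
  obtain ⟨N, hsub, hNm, hN0⟩ := exists_measurable_superset_of_null hnull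
  have hKnull : ∀ᵐ x ∂μ, K x N = 0 := hK N hNm hN0
  have hint : ∀ᵐ x ∂μ, ∫ y, g y ∂K x = ∫ y, g' y ∂K x := by
    filter_upwards [hKnull] with x hx
    refine integral_congr_ae ?_
    rw [Filter.EventuallyEq, ae_iff]
    exact measure_mono_null hsub hx
  unfold dform
  refine integral_congr_ae ?_
  filter_upwards [hint, hgg'] with x h1 h2
  rw [h1, h2]

private lemma aux_varF_congr {g g' : Y → ℝ} (hgg' : g =ᵐ[μ] g') : varF μ g = varF μ g' := by
  unfold varF
  have e1 : ∫ x, g x ^ 2 ∂μ = ∫ x, g' x ^ 2 ∂μ :=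
    integral_congr_ae (hgg'.mono fun x hx => by simp only []; rw [hx])
  have e2 : ∫ x, g x ∂μ = ∫ x, g' x ∂μ := integral_congr_ae hgg'
  rw [e1, e2]

end CongrLemmas

section GapLemmas

variable {Y : Type*} [MeasurableSpace Y] {μ : Measure Y} [IsProbabilityMeasure μ]
  {P : Kernel Y Y} [IsMarkovKernel P]

private lemma aux_gapR_elt_nonneg (hsym : (μ ⊗ₘ P).map Prod.swap = μ ⊗ₘ P)
    (hrev : ∀ A B : Set Y, MeasurableSet A → MeasurableSet B →
      ∫⁻ x in A, P x B ∂μ = ∫⁻ x in B, P x A ∂μ) :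
    ∀ r ∈ {r : ℝ | ∃ f : Y → ℝ, MemLp f 2 μ ∧ 0 < varF μ f ∧
      r = dform μ (fun x => P x) f / varF μ f}, 0 ≤ r := by
  rintro r ⟨f, hf2, hvar, rfl⟩
  have hfg : f =ᵐ[μ] hf2.1.mk f := hf2.1.ae_eq_mk
  have hg : Measurable (hf2.1.mk f) := hf2.1.stronglyMeasurable_mk.measurable
  have hg2 : MemLp (hf2.1.mk f) 2 μ := hf2.ae_eq hfg
  have hd : dform μ (fun x => P x) f = dform μ (fun x => P x) (hf2.1.mk f) :=
    aux_dform_congr (fun N hN h0 => aux_null_P hrev hN h0) hfg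
  rw [hd, aux_varF_congr hfg]
  exact div_nonneg (aux_dform_nonneg hsym hg hg2) (aux_varF_nonneg hg2)

private lemma aux_gapR_nonneg (hsym : (μ ⊗ₘ P).map Prod.swap = μ ⊗ₘ P)
    (hrev : ∀ A B : Set Y, MeasurableSet A → MeasurableSet B →
      ∫⁻ x in A, P x B ∂μ = ∫⁻ x in B, P x A ∂μ) :
    0 ≤ gapR μ (fun x => P x) :=
  Real.sInf_nonneg (aux_gapR_elt_nonneg hsym hrev)

private lemma aux_gap_mul (hsym : (μ ⊗ₘ P).map Prod.swap = μ ⊗ₘ P)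
    (hrev : ∀ A B : Set Y, MeasurableSet A → MeasurableSet B →
      ∫⁻ x in A, P x B ∂μ = ∫⁻ x in B, P x A ∂μ)
    {g : Y → ℝ} (hg : Measurable g) (hg2 : MemLp g 2 μ) :
    gapR μ (fun x => P x) * varF μ g ≤ dform μ (fun x => P x) g := by
  have hv := aux_varF_nonneg hg2
  rcases hv.eq_or_lt with h | h
  · rw [← h, mul_zero]; exact aux_dform_nonneg hsym hg hg2
  · have hbdd : BddBelow {r : ℝ | ∃ f : Y → ℝ, MemLp f 2 μ ∧ 0 < varF μ f ∧
        r = dform μ (fun x => P x) f / varF μ f} :=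
      ⟨0, fun r hr => aux_gapR_elt_nonneg hsym hrev r hr⟩
    have hmem : dform μ (fun x => P x) g / varF μ g ∈ {r : ℝ | ∃ f : Y → ℝ, MemLp f 2 μ ∧
        0 < varF μ f ∧ r = dform μ (fun x => P x) f / varF μ f} := ⟨g, hg2, h, rfl⟩
    have hle := csInf_le hbdd hmem
    calc gapR μ (fun x => P x) * varF μ g
        ≤ (dform μ (fun x => P x) g / varF μ g) * varF μ g := by
          exact mul_le_mul_of_nonneg_right hle hv
    _ = dform μ (fun x => P x) g := div_mul_cancel₀ _ h.ne'
  
end GapLemmas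

section Global

variable {Θ X : Type*} [MeasurableSpace Θ] [MeasurableSpace X]
  {π : Measure (Θ × X)} [IsProbabilityMeasure π]
  {ξ : Kernel Θ X} [IsMarkovKernel ξ] {η : Kernel X Θ} [IsMarkovKernel η]
  {Pk : Kernel (Θ × X) X} [IsMarkovKernel Pk]

private lemma aux_TL1 (hdis₁ : π = Measure.compProd π.fst ξ) {F : Θ × X → ℝ≥0∞}
    (hF : Measurable F) :
    ∫⁻ p, F p ∂π = ∫⁻ θ, ∫⁻ x, F (θ, x) ∂ξ θ ∂π.fst := by
  conv_lhs => rw [hdis₁]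
  exact Measure.lintegral_compProd hF

private lemma aux_TL2 (hdis₂ : π = (Measure.compProd π.snd η).map Prod.swap) {F : Θ × X → ℝ≥0∞}
    (hF : Measurable F) :
    ∫⁻ p, F p ∂π = ∫⁻ x, ∫⁻ θ, F (θ, x) ∂η x ∂π.snd := by
  conv_lhs => rw [hdis₂]
  rw [lintegral_map hF measurable_swap]
  exact Measure.lintegral_compProd (hF.comp measurable_swap)

private lemma aux_TI1 (hdis₁ : π = Measure.compProd π.fst ξ) {F : Θ × X → ℝ}
    (hF : Integrable F π) :
    ∫ p, F p ∂π = ∫ θ, ∫ x, F (θ, x) ∂ξ θ ∂π.fst := by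
  conv_lhs => rw [hdis₁]
  exact Measure.integral_compProd (by rwa [← hdis₁])

private lemma aux_TI2 (hdis₂ : π = (Measure.compProd π.snd η).map Prod.swap) {F : Θ × X → ℝ}
    (hF : Integrable F π) :
    ∫ p, F p ∂π = ∫ x, ∫ θ, F (θ, x) ∂η x ∂π.snd := by
  have hm : AEStronglyMeasurable F ((π.snd ⊗ₘ η).map Prod.swap) := by
    rw [← hdis₂]; exact hF.1
  have h1 : Integrable (fun q : X × Θ => F q.swap) (π.snd ⊗ₘ η) := by
    have h2 : Integrable F ((π.snd ⊗ₘ η).map Prod.swap) := by rwa [hdis₂] at hF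
    exact (integrable_map_measure hm measurable_swap.aemeasurable).1 h2
  conv_lhs => rw [hdis₂]
  rw [integral_map measurable_swap.aemeasurable hm]
  exact Measure.integral_compProd h1

private lemma aux_snd_lint {h : X → ℝ≥0∞} (hh : Measurable h) :
    ∫⁻ x, h x ∂π.snd = ∫⁻ p : Θ × X, h p.2 ∂π := by
  rw [show π.snd = π.map Prod.snd from rfl, lintegral_map hh measurable_snd]

private lemma aux_snd_int {h : X → ℝ} (hh : AEStronglyMeasurable h π.snd) :
    ∫ x, h x ∂π.snd = ∫ p : Θ × X, h p.2 ∂π := by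
  rw [show π.snd = π.map Prod.snd from rfl] at hh ⊢
  exact integral_map measurable_snd.aemeasurable hh

private lemma aux_snd_integrable {h : X → ℝ} (hh : AEStronglyMeasurable h π.snd) :
    Integrable h π.snd ↔ Integrable (fun p : Θ × X => h p.2) π := by
  rw [show π.snd = π.map Prod.snd from rfl] at hh ⊢
  exact integrable_map_measure hh measurable_snd.aemeasurable

private lemma aux_fst_integrable {h : Θ → ℝ} (hh : AEStronglyMeasurable h π.fst) :
    Integrable h π.fst ↔ Integrable (fun p : Θ × X => h p.1) π := by
  rw [show π.fst = π.map Prod.fst from rfl] at hh ⊢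
  exact integrable_map_measure hh measurable_fst.aemeasurable

private lemma aux_xi_marg (hdis₁ : π = Measure.compProd π.fst ξ) {N : Set X}
    (hN : MeasurableSet N) :
    ∫⁻ θ, ξ θ N ∂π.fst = π.snd N := by
  rw [Measure.snd_apply hN]
  conv_rhs => rw [hdis₁, Measure.compProd_apply (measurable_snd hN)]
  rfl

private lemma aux_xi_ae_null (hdis₁ : π = Measure.compProd π.fst ξ) {N : Set X}
    (hN : MeasurableSet N) (h0 : π.snd N = 0) :
    ∀ᵐ θ ∂π.fst, ξ θ N = 0 := by
  have h1 : ∫⁻ θ, ξ θ N ∂π.fst = 0 := by rw [aux_xi_marg hdis₁ hN, h0]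
  have h2 := (lintegral_eq_zero_iff (Kernel.measurable_coe ξ hN)).1 h1
  filter_upwards [h2] with θ hθ using hθ

private lemma aux_ae_eq_lift (hdis₁ : π = Measure.compProd π.fst ξ) {h h' : X → ℝ}
    (hhh : h =ᵐ[π.snd] h') : ∀ᵐ θ ∂π.fst, h =ᵐ[ξ θ] h' := by
  have hnull : π.snd {x | h x ≠ h' x} = 0 := by rwa [Filter.EventuallyEq, ae_iff] at hhh
  obtain ⟨N, hsub, hNm, hN0⟩ := exists_measurable_superset_of_null hnull
  filter_upwards [aux_xi_ae_null hdis₁ hNm hN0] with θ hθ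
  rw [Filter.EventuallyEq, ae_iff]
  exact measure_mono_null hsub hθ

private lemma aux_ae_memLp (hdis₁ : π = Measure.compProd π.fst ξ)
    (hdis₂ : π = (Measure.compProd π.snd η).map Prod.swap)
    {g : X → ℝ} (hg : Measurable g) (hg2 : MemLp g 2 π.snd) :
    ∀ᵐ θ ∂π.fst, MemLp g 2 (ξ θ) := by
  have hB : Measurable fun y => ENNReal.ofReal (g y ^ 2) := (hg.pow_const 2).ennreal_ofReal
  have hfin : ∫⁻ x, ENNReal.ofReal (g x ^ 2) ∂π.snd ≠ ⊤ := aux_lint_sq hg2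
  have hlift : ∫⁻ θ, (∫⁻ x, ENNReal.ofReal (g x ^ 2) ∂ξ θ) ∂π.fst
      = ∫⁻ x, ENNReal.ofReal (g x ^ 2) ∂π.snd := by
    rw [aux_snd_lint hB, aux_TL1 hdis₁ (F := fun p : Θ × X => ENNReal.ofReal (g p.2 ^ 2)) (hB.comp measurable_snd)]
  have hmeas : Measurable fun θ => ∫⁻ x, ENNReal.ofReal (g x ^ 2) ∂ξ θ :=
    Measurable.lintegral_kernel_prod_right
      (show Measurable (Function.uncurry fun (_ : Θ) y => ENNReal.ofReal (g y ^ 2)) from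
        hB.comp measurable_snd)
  have hae := ae_lt_top hmeas (by rw [hlift]; exact hfin)
  exact hae.mono fun θ hθ => aux_memLp_two hg hθ.ne

private lemma aux_gamma_null (hdis₁ : π = Measure.compProd π.fst ξ)
    (hdis₂ : π = (Measure.compProd π.snd η).map Prod.swap)
    {N : Set X} (hN : MeasurableSet N) (h0 : π.snd N = 0) :
    ∀ᵐ x ∂π.snd, GammaX η ξ x N = 0 := by
  have hb : ∀ x, GammaX η ξ x N = ∫⁻ θ, ξ θ N ∂η x := fun x =>
    Measure.bind_apply hN (Kernel.measurable ξ).aemeasurable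
  have hmeas : Measurable fun x => ∫⁻ θ, ξ θ N ∂η x :=
    Measurable.lintegral_kernel_prod_right (κ := η)
      (show Measurable (Function.uncurry fun (_ : X) θ => ξ θ N) from
        (Kernel.measurable_coe ξ hN).comp measurable_snd)
  have hkey : ∫⁻ x, (∫⁻ θ, ξ θ N ∂η x) ∂π.snd = 0 := by
    rw [← aux_TL2 hdis₂ (F := fun p : Θ × X => ξ p.1 N)
        ((Kernel.measurable_coe ξ hN).comp measurable_fst),
      aux_TL1 hdis₁ (F := fun p : Θ × X => ξ p.1 N)
        ((Kernel.measurable_coe ξ hN).comp measurable_fst)]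
    simp only [lintegral_const, measure_univ, mul_one]
    rw [aux_xi_marg hdis₁ hN, h0]
  have h2 := (lintegral_eq_zero_iff hmeas).1 hkey
  filter_upwards [h2] with x hx
  rw [hb x]; exact hx

private lemma aux_phi_null (hdis₁ : π = Measure.compProd π.fst ξ)
    (hdis₂ : π = (Measure.compProd π.snd η).map Prod.swap)
    (hrev : ∀ θ : Θ, ∀ A B : Set X, MeasurableSet A → MeasurableSet B →
      ∫⁻ x in A, Pk (θ, x) B ∂(ξ θ) = ∫⁻ x in B, Pk (θ, x) A ∂(ξ θ))
    {N : Set X} (hN : MeasurableSet N) (h0 : π.snd N = 0) :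
    ∀ᵐ x ∂π.snd, PhiX η Pk x N = 0 := by
  have hb : ∀ x, PhiX η Pk x N = ∫⁻ θ, Pk (θ, x) N ∂η x := fun x =>
    Measure.bind_apply hN ((Kernel.measurable Pk).comp measurable_prodMk_right).aemeasurable
  have hmeas : Measurable fun x => ∫⁻ θ, Pk (θ, x) N ∂η x :=
    Measurable.lintegral_kernel_prod_right (κ := η)
      (show Measurable (Function.uncurry fun (x : X) θ => Pk (θ, x) N) from
        (Kernel.measurable_coe Pk hN).comp measurable_swap)
  have hinner : ∀ θ, ∫⁻ x, Pk (θ, x) N ∂ξ θ = ξ θ N := by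
    intro θ
    have h2 := hrev θ Set.univ N MeasurableSet.univ hN
    rw [Measure.restrict_univ] at h2
    rw [h2]
    calc ∫⁻ x in N, Pk (θ, x) Set.univ ∂ξ θ = ∫⁻ _x in N, 1 ∂ξ θ := by simp
    _ = ξ θ N := by simp
  have hkey : ∫⁻ x, (∫⁻ θ, Pk (θ, x) N ∂η x) ∂π.snd = 0 := by
    rw [← aux_TL2 hdis₂ (F := fun p : Θ × X => Pk p N) (Kernel.measurable_coe Pk hN),
      aux_TL1 hdis₁ (F := fun p : Θ × X => Pk p N) (Kernel.measurable_coe Pk hN)]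
    rw [lintegral_congr hinner, aux_xi_marg hdis₁ hN, h0]
  have h2 := (lintegral_eq_zero_iff hmeas).1 hkey
  filter_upwards [h2] with x hx
  rw [hb x]; exact hx

end Global

section Master

variable {Θ X : Type*} [MeasurableSpace Θ] [MeasurableSpace X]
  {π : Measure (Θ × X)} [IsProbabilityMeasure π]
  {ξ : Kernel Θ X} [IsMarkovKernel ξ] {η : Kernel X Θ} [IsMarkovKernel η]
  {Pk : Kernel (Θ × X) X} [IsMarkovKernel Pk]

private lemma aux_master (hdis₁ : π = Measure.compProd π.fst ξ)
    (hdis₂ : π = (Measure.compProd π.snd η).map Prod.swap)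
    (hrev : ∀ θ : Θ, ∀ A B : Set X, MeasurableSet A → MeasurableSet B →
      ∫⁻ x in A, Pk (θ, x) B ∂(ξ θ) = ∫⁻ x in B, Pk (θ, x) A ∂(ξ θ))
    {g : X → ℝ} (hg : Measurable g) (hg2 : MemLp g 2 π.snd) :
    Integrable (fun θ => varF (ξ θ) g) π.fst ∧
    Integrable (fun θ => dform (ξ θ) (fun x => Pk (θ, x)) g) π.fst ∧
    dform π.snd (GammaX η ξ) g = ∫ θ, varF (ξ θ) g ∂π.fst ∧
    dform π.snd (PhiX η Pk) g = ∫ θ, dform (ξ θ) (fun x => Pk (θ, x)) g ∂π.fst ∧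
    (∀ᵐ θ ∂π.fst, 0 ≤ varF (ξ θ) g ∧
      0 ≤ dform (ξ θ) (fun x => Pk (θ, x)) g ∧
      dform (ξ θ) (fun x => Pk (θ, x)) g ≤ 2 * varF (ξ θ) g ∧
      gapR (ξ θ) (fun x => Pk (θ, x)) * varF (ξ θ) g ≤ dform (ξ θ) (fun x => Pk (θ, x)) g) ∧
    dform π.snd (GammaX η ξ) g ≤ ∫ x, g x ^ 2 ∂π.snd := by
  classical
  -- basic notation
  set m : Θ → ℝ := fun θ => ∫ x, g x ∂ξ θ with hm_def
  set q : Θ → ℝ := fun θ => ∫ x, g x ^ 2 ∂ξ θ with hq_def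
  have hvar_eq : ∀ θ, varF (ξ θ) g = q θ - m θ ^ 2 := fun θ => rfl
  have hB : Measurable fun y => ENNReal.ofReal (g y ^ 2) := (hg.pow_const 2).ennreal_ofReal
  have hfin : ∫⁻ x, ENNReal.ofReal (g x ^ 2) ∂π.snd ≠ ⊤ := aux_lint_sq hg2
  -- the symmetrized per-theta kernels
  have hsymθ : ∀ θ : Θ,
      ((ξ θ) ⊗ₘ (Pk.comap (Prod.mk θ) measurable_prodMk_left)).map Prod.swap
        = (ξ θ) ⊗ₘ (Pk.comap (Prod.mk θ) measurable_prodMk_left) :=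
    fun θ => aux_symm (fun A B hA hB => hrev θ A B hA hB)
  -- measurability of m, q
  have hm_meas : Measurable m :=
    ((hg.comp measurable_snd).stronglyMeasurable
      (f := fun p : Θ × X => g p.2)).integral_kernel_prod_right'.measurable
  have hq_meas : Measurable q :=
    (((hg.comp measurable_snd).pow_const 2).stronglyMeasurable
      (f := fun p : Θ × X => g p.2 ^ 2)).integral_kernel_prod_right'.measurable
  -- lintegral of squares through xi
  have hWmeas : Measurable fun θ => ∫⁻ x, ENNReal.ofReal (g x ^ 2) ∂ξ θ :=
    Measurable.lintegral_kernel_prod_right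
      (show Measurable (Function.uncurry fun (_ : Θ) y => ENNReal.ofReal (g y ^ 2)) from
        hB.comp measurable_snd)
  have hlsq : ∫⁻ θ, (∫⁻ x, ENNReal.ofReal (g x ^ 2) ∂ξ θ) ∂π.fst
      = ∫⁻ x, ENNReal.ofReal (g x ^ 2) ∂π.snd := by
    rw [aux_snd_lint hB,
      aux_TL1 hdis₁ (F := fun p : Θ × X => ENNReal.ofReal (g p.2 ^ 2)) (hB.comp measurable_snd)]
  have haeL2 : ∀ᵐ θ ∂π.fst, MemLp g 2 (ξ θ) := aux_ae_memLp hdis₁ hdis₂ hg hg2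
  -- q integrable with integral equal to that of g²
  have hq0 : ∀ θ, 0 ≤ q θ := fun θ => integral_nonneg fun x => sq_nonneg _
  have hq_lint : ∫⁻ θ, ENNReal.ofReal (q θ) ∂π.fst ≠ ⊤ := by
    have he : ∀ᵐ θ ∂π.fst,
        ENNReal.ofReal (q θ) = ∫⁻ x, ENNReal.ofReal (g x ^ 2) ∂ξ θ :=
      haeL2.mono fun θ hθ => ofReal_integral_eq_lintegral_ofReal hθ.integrable_sq
        (Filter.Eventually.of_forall fun x => sq_nonneg _)
    rw [lintegral_congr_ae he, hlsq]; exact hfin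
  have hq_int : Integrable q π.fst := aux_int_of_lint hq_meas hq0 hq_lint
  have hg2sq_snd : Integrable (fun p : Θ × X => g p.2 ^ 2) π :=
    (aux_snd_integrable (hg.pow_const 2).aestronglyMeasurable).1 hg2.integrable_sq
  have hq_val : ∫ θ, q θ ∂π.fst = ∫ x, g x ^ 2 ∂π.snd := by
    rw [aux_snd_int (hg.pow_const 2).aestronglyMeasurable,
      aux_TI1 hdis₁ (F := fun p : Θ × X => g p.2 ^ 2) hg2sq_snd]
  -- Jensen for m
  have hJen : ∀ᵐ θ ∂π.fst, m θ ^ 2 ≤ q θ := haeL2.mono fun θ hθ => aux_jensen hθ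
  have hm2_int : Integrable (fun θ => m θ ^ 2) π.fst :=
    Integrable.mono' hq_int ((hm_meas.pow_const 2).aestronglyMeasurable)
      (hJen.mono fun θ hθ => by
        rw [Real.norm_eq_abs, abs_of_nonneg (sq_nonneg _)]; exact hθ)
  have hm2_0 : 0 ≤ ∫ θ, m θ ^ 2 ∂π.fst := integral_nonneg fun θ => sq_nonneg _
  have hvar_int : Integrable (fun θ => varF (ξ θ) g) π.fst := hq_int.sub hm2_int
  have hm2_lint : ∫⁻ θ, ENNReal.ofReal (m θ ^ 2) ∂π.fst ≠ ⊤ :=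
    aux_lint_of_int hm2_int fun θ => sq_nonneg _
  ---- GAMMA PART ----
  -- the bind integral a.e.
  have hΓbind : ∀ᵐ x ∂π.snd, ∫ y, g y ∂(GammaX η ξ x) = ∫ θ', m θ' ∂η x := by
    have hLmeas : Measurable fun x => ∫⁻ θ', (∫⁻ y, ENNReal.ofReal (g y ^ 2) ∂ξ θ') ∂η x :=
      Measurable.lintegral_kernel_prod_right (κ := η)
        (show Measurable (Function.uncurry fun (_ : X) θ' =>
            ∫⁻ y, ENNReal.ofReal (g y ^ 2) ∂ξ θ') from hWmeas.comp measurable_snd)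
    have hLfin : ∫⁻ x, (∫⁻ θ', (∫⁻ y, ENNReal.ofReal (g y ^ 2) ∂ξ θ') ∂η x) ∂π.snd ≠ ⊤ := by
      rw [← aux_TL2 hdis₂
          (F := fun p : Θ × X => ∫⁻ y, ENNReal.ofReal (g y ^ 2) ∂ξ p.1)
          (hWmeas.comp measurable_fst),
        aux_TL1 hdis₁ (F := fun p : Θ × X => ∫⁻ y, ENNReal.ofReal (g y ^ 2) ∂ξ p.1)
          (hWmeas.comp measurable_fst)]
      simp only [lintegral_const, measure_univ, mul_one]
      rw [hlsq]; exact hfin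
    filter_upwards [(ae_lt_top hLmeas hLfin)] with x hx
    have hint : Integrable (fun p : Θ × X => g p.2) ((η x) ⊗ₘ ξ) := by
      refine (aux_memLp_two (show Measurable fun p : Θ × X => g p.2 from
        hg.comp measurable_snd) ?_).integrable one_le_two
      rw [Measure.lintegral_compProd (show Measurable fun p : Θ × X =>
        ENNReal.ofReal (g p.2 ^ 2) from hB.comp measurable_snd)]
      exact hx.ne
    exact aux_integral_bind (η x) ξ hg hint
  -- M x := ∫ m dη x
  set M : X → ℝ := fun x => ∫ θ', m θ' ∂η x with hM_def
  have hM_meas : Measurable M :=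
    ((hm_meas.comp measurable_snd).stronglyMeasurable
      (f := fun p : X × Θ => m p.2)).integral_kernel_prod_right'.measurable
  -- Jensen for M: a.e. MemLp m 2 (η x)
  have hm2_lint_eta : ∫⁻ x, (∫⁻ θ', ENNReal.ofReal (m θ' ^ 2) ∂η x) ∂π.snd ≠ ⊤ := by
    rw [← aux_TL2 hdis₂ (F := fun p : Θ × X => ENNReal.ofReal (m p.1 ^ 2))
        (((hm_meas.pow_const 2).ennreal_ofReal).comp measurable_fst),
      aux_TL1 hdis₁ (F := fun p : Θ × X => ENNReal.ofReal (m p.1 ^ 2))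
        (((hm_meas.pow_const 2).ennreal_ofReal).comp measurable_fst)]
    simp only [lintegral_const, measure_univ, mul_one]
    exact hm2_lint
  have hm2eta_meas : Measurable fun x => ∫⁻ θ', ENNReal.ofReal (m θ' ^ 2) ∂η x :=
    Measurable.lintegral_kernel_prod_right (κ := η)
      (show Measurable (Function.uncurry fun (_ : X) θ' => ENNReal.ofReal (m θ' ^ 2)) from
        ((hm_meas.pow_const 2).ennreal_ofReal).comp measurable_snd)
  have hMLp : ∀ᵐ x ∂π.snd, MemLp m 2 (η x) := by
    filter_upwards [ae_lt_top hm2eta_meas hm2_lint_eta] with x hx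
    exact aux_memLp_two hm_meas hx.ne
  have hMJen : ∀ᵐ x ∂π.snd, M x ^ 2 ≤ ∫ θ', m θ' ^ 2 ∂η x :=
    hMLp.mono fun x hx => aux_jensen hx
  -- R x := ∫ m² dη x integrable
  set R : X → ℝ := fun x => ∫ θ', m θ' ^ 2 ∂η x with hR_def
  have hR_meas : Measurable R :=
    (((hm_meas.comp measurable_snd).pow_const 2).stronglyMeasurable
      (f := fun p : X × Θ => m p.2 ^ 2)).integral_kernel_prod_right'.measurable
  have hR_int : Integrable R π.snd := by
    refine aux_int_of_lint hR_meas (fun x => integral_nonneg fun θ' => sq_nonneg _) ?_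
    have he : ∀ᵐ x ∂π.snd, ENNReal.ofReal (R x) = ∫⁻ θ', ENNReal.ofReal (m θ' ^ 2) ∂η x :=
      hMLp.mono fun x hx => ofReal_integral_eq_lintegral_ofReal hx.integrable_sq
        (Filter.Eventually.of_forall fun θ' => sq_nonneg _)
    rw [lintegral_congr_ae he]
    exact hm2_lint_eta
  -- integrability of g * M
  have hgM_int : Integrable (fun x => g x * M x) π.snd := by
    refine Integrable.mono' ((hg2.integrable_sq.add hR_int).div_const 2)
      (hg.mul hM_meas).aestronglyMeasurable ?_
    filter_upwards [hMJen] with x hx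
    have h1 : ‖g x * M x‖ ≤ (g x ^ 2 + M x ^ 2) / 2 := aux_abs_mul_le _ _
    have h2 : M x ^ 2 ≤ R x := hx
    simp only [Pi.add_apply]
    calc ‖g x * M x‖ ≤ (g x ^ 2 + M x ^ 2) / 2 := h1
    _ ≤ (g x ^ 2 + R x) / 2 := by linarith
  -- dform Gamma formula
  have hΓ1 : dform π.snd (GammaX η ξ) g = ∫ x, g x ^ 2 ∂π.snd - ∫ x, g x * M x ∂π.snd := by
    have h0 : dform π.snd (GammaX η ξ) g = ∫ x, (g x ^ 2 - g x * M x) ∂π.snd := by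
      unfold dform
      refine integral_congr_ae ?_
      filter_upwards [hΓbind] with x hx
      rw [hx]; ring
    rw [h0, integral_sub hg2.integrable_sq hgM_int]
  -- compute ∫ g M
  have hgm_prod_int : Integrable (fun p : Θ × X => g p.2 * m p.1) π := by
    refine Integrable.mono' ((hg2sq_snd.add ((aux_fst_integrable
        ((hm_meas.pow_const 2).aestronglyMeasurable)).1 hm2_int)).div_const 2)
      ((hg.comp measurable_snd).mul (hm_meas.comp measurable_fst)).aestronglyMeasurable ?_
    refine Filter.Eventually.of_forall fun p => ?_
    simpa using aux_abs_mul_le (g p.2) (m p.1)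
  have hgM_val : ∫ x, g x * M x ∂π.snd = ∫ θ, m θ ^ 2 ∂π.fst := by
    have e1 : ∫ x, g x * M x ∂π.snd = ∫ x, ∫ θ', g x * m θ' ∂η x ∂π.snd := by
      refine integral_congr_ae (Filter.Eventually.of_forall fun x => ?_)
      rw [hM_def]; dsimp only; rw [integral_const_mul]
    have e2 : ∫ x, ∫ θ', g x * m θ' ∂η x ∂π.snd = ∫ p : Θ × X, g p.2 * m p.1 ∂π :=
      (aux_TI2 hdis₂ (F := fun p : Θ × X => g p.2 * m p.1) hgm_prod_int).symm
    have e3 : ∫ p : Θ × X, g p.2 * m p.1 ∂π = ∫ θ, ∫ x, g x * m θ ∂ξ θ ∂π.fst :=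
      aux_TI1 hdis₁ (F := fun p : Θ × X => g p.2 * m p.1) hgm_prod_int
    have e4 : ∀ θ, ∫ x, g x * m θ ∂ξ θ = m θ ^ 2 := by
      intro θ
      rw [integral_mul_const]
      have : (∫ x, g x ∂ξ θ) = m θ := rfl
      rw [this]; ring
    rw [e1, e2, e3]
    exact integral_congr_ae (Filter.Eventually.of_forall fun θ => e4 θ)
  have hΓ2 : dform π.snd (GammaX η ξ) g
      = ∫ x, g x ^ 2 ∂π.snd - ∫ θ, m θ ^ 2 ∂π.fst := by rw [hΓ1, hgM_val]
  have hΓ : dform π.snd (GammaX η ξ) g = ∫ θ, varF (ξ θ) g ∂π.fst := by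
    have : ∫ θ, varF (ξ θ) g ∂π.fst = ∫ θ, (q θ - m θ ^ 2) ∂π.fst :=
      integral_congr_ae (Filter.Eventually.of_forall fun θ => hvar_eq θ)
    rw [hΓ2, this, integral_sub hq_int hm2_int, hq_val]
  have hΓle : dform π.snd (GammaX η ξ) g ≤ ∫ x, g x ^ 2 ∂π.snd := by
    rw [hΓ2]; linarith
  ---- PHI PART ----
  set u : Θ × X → ℝ := fun p => ∫ y, g y ∂Pk p with hu_def
  set s : Θ × X → ℝ := fun p => ∫ y, g y ^ 2 ∂Pk p with hs_def
  have hu_meas : Measurable u :=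
    ((hg.comp measurable_snd).stronglyMeasurable
      (f := fun r : (Θ × X) × X => g r.2)).integral_kernel_prod_right' (κ := Pk) |>.measurable
  have hs_meas : Measurable s :=
    (((hg.comp measurable_snd).pow_const 2).stronglyMeasurable
      (f := fun r : (Θ × X) × X => g r.2 ^ 2)).integral_kernel_prod_right' (κ := Pk) |>.measurable
  have hs0 : ∀ p, 0 ≤ s p := fun p => integral_nonneg fun y => sq_nonneg _
  have hPkW_meas : Measurable fun p : Θ × X => ∫⁻ y, ENNReal.ofReal (g y ^ 2) ∂Pk p :=
    Measurable.lintegral_kernel_prod_right (κ := Pk)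
      (show Measurable (Function.uncurry fun (_ : Θ × X) y => ENNReal.ofReal (g y ^ 2)) from
        hB.comp measurable_snd)
  have hPkW_lint : ∫⁻ p, (∫⁻ y, ENNReal.ofReal (g y ^ 2) ∂Pk p) ∂π
      = ∫⁻ x, ENNReal.ofReal (g x ^ 2) ∂π.snd := by
    have h1 : ∫⁻ p, (∫⁻ y, ENNReal.ofReal (g y ^ 2) ∂Pk p) ∂π
        = ∫⁻ θ, ∫⁻ x, (∫⁻ y, ENNReal.ofReal (g y ^ 2) ∂Pk (θ, x)) ∂ξ θ ∂π.fst :=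
      aux_TL1 hdis₁ (F := fun p : Θ × X => ∫⁻ y, ENNReal.ofReal (g y ^ 2) ∂Pk p) hPkW_meas
    have h2 : ∫⁻ θ, ∫⁻ x, (∫⁻ y, ENNReal.ofReal (g y ^ 2) ∂Pk (θ, x)) ∂ξ θ ∂π.fst
        = ∫⁻ θ, (∫⁻ y, ENNReal.ofReal (g y ^ 2) ∂ξ θ) ∂π.fst :=
      lintegral_congr fun θ => aux_lint_inv (hsymθ θ) hB
    exact h1.trans (h2.trans hlsq)
  have hπL2 : ∀ᵐ p ∂π, MemLp g 2 (Pk p) := by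
    have h1 := ae_lt_top hPkW_meas (by rw [hPkW_lint]; exact hfin)
    exact h1.mono fun p hp => aux_memLp_two hg hp.ne
  have hπJen : ∀ᵐ p ∂π, u p ^ 2 ≤ s p := hπL2.mono fun p hp => aux_jensen hp
  have hs_lint : ∫⁻ p, ENNReal.ofReal (s p) ∂π ≠ ⊤ := by
    have he : ∀ᵐ p ∂π, ENNReal.ofReal (s p) = ∫⁻ y, ENNReal.ofReal (g y ^ 2) ∂Pk p :=
      hπL2.mono fun p hp => ofReal_integral_eq_lintegral_ofReal hp.integrable_sq
        (Filter.Eventually.of_forall fun y => sq_nonneg _)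
    rw [lintegral_congr_ae he, hPkW_lint]; exact hfin
  have hs_int : Integrable s π := aux_int_of_lint hs_meas hs0 hs_lint
  have hswap_ae : ∀ᵐ x ∂π.snd, ∀ᵐ θ' ∂η x, u (θ', x) ^ 2 ≤ s (θ', x) := by
    have hQmeas : MeasurableSet {p : Θ × X | u p ^ 2 ≤ s p} :=
      measurableSet_le (hu_meas.pow_const 2) hs_meas
    have h2 : ∀ᵐ p ∂((π.snd ⊗ₘ η).map Prod.swap), u p ^ 2 ≤ s p := by
      rw [← hdis₂]; exact hπJen
    have h1 : ∀ᵐ q ∂(π.snd ⊗ₘ η), u q.swap ^ 2 ≤ s q.swap :=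
      (ae_map_iff measurable_swap.aemeasurable hQmeas).1 h2
    exact Measure.ae_ae_of_ae_compProd h1
  have hs_lint_eta_meas : Measurable fun x => ∫⁻ θ', ENNReal.ofReal (s (θ', x)) ∂η x :=
    Measurable.lintegral_kernel_prod_right (κ := η)
      (show Measurable (Function.uncurry fun (x : X) θ' => ENNReal.ofReal (s (θ', x))) from
        (hs_meas.ennreal_ofReal).comp measurable_swap)
  have hs_lint_eta : ∫⁻ x, (∫⁻ θ', ENNReal.ofReal (s (θ', x)) ∂η x) ∂π.snd ≠ ⊤ := by
    rw [← aux_TL2 hdis₂ (F := fun p : Θ × X => ENNReal.ofReal (s p)) hs_meas.ennreal_ofReal]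
    exact hs_lint
  have hsx_fin : ∀ᵐ x ∂π.snd, (∫⁻ θ', ENNReal.ofReal (s (θ', x)) ∂η x) ≠ ⊤ :=
    (ae_lt_top hs_lint_eta_meas hs_lint_eta).mono fun x hx => hx.ne
  have hsx_int : ∀ᵐ x ∂π.snd, Integrable (fun θ' => s (θ', x)) (η x) :=
    hsx_fin.mono fun x hx =>
      aux_int_of_lint (hs_meas.comp measurable_prodMk_right) (fun θ' => hs0 _) hx
  have hux_L2 : ∀ᵐ x ∂π.snd, MemLp (fun θ' => u (θ', x)) 2 (η x) := by
    filter_upwards [hswap_ae, hsx_fin] with x hx1 hx2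
    refine aux_memLp_two (hu_meas.comp measurable_prodMk_right) ?_
    have hb : ∫⁻ θ', ENNReal.ofReal (u (θ', x) ^ 2) ∂η x
        ≤ ∫⁻ θ', ENNReal.ofReal (s (θ', x)) ∂η x :=
      lintegral_mono_ae (hx1.mono fun θ' h => ENNReal.ofReal_le_ofReal h)
    exact ne_top_of_le_ne_top hx2 hb
  set Nf : X → ℝ := fun x => ∫ θ', u (θ', x) ∂η x with hNf_def
  have hN_meas : Measurable Nf :=
    ((hu_meas.comp measurable_swap).stronglyMeasurable
      (f := fun r : X × Θ => u (r.2, r.1))).integral_kernel_prod_right' (κ := η) |>.measurable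
  have hΦbind : ∀ᵐ x ∂π.snd, ∫ y, g y ∂(PhiX η Pk x) = Nf x := by
    have hLmeas : Measurable fun x =>
        ∫⁻ θ', (∫⁻ y, ENNReal.ofReal (g y ^ 2) ∂Pk (θ', x)) ∂η x :=
      Measurable.lintegral_kernel_prod_right (κ := η)
        (show Measurable (Function.uncurry fun (x : X) θ' =>
            ∫⁻ y, ENNReal.ofReal (g y ^ 2) ∂Pk (θ', x)) from hPkW_meas.comp measurable_swap)
    have hLfin : ∫⁻ x, (∫⁻ θ', (∫⁻ y, ENNReal.ofReal (g y ^ 2) ∂Pk (θ', x)) ∂η x) ∂π.snd ≠ ⊤ := by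
      rw [← aux_TL2 hdis₂ (F := fun p : Θ × X => ∫⁻ y, ENNReal.ofReal (g y ^ 2) ∂Pk p) hPkW_meas,
        hPkW_lint]
      exact hfin
    filter_upwards [ae_lt_top hLmeas hLfin] with x hx
    have hint : Integrable (fun r : Θ × X => g r.2)
        ((η x) ⊗ₘ (Pk.comap (fun θ' => (θ', x)) measurable_prodMk_right)) := by
      refine (aux_memLp_two (show Measurable fun r : Θ × X => g r.2 from
        hg.comp measurable_snd) ?_).integrable one_le_two
      rw [Measure.lintegral_compProd (show Measurable fun r : Θ × X =>
        ENNReal.ofReal (g r.2 ^ 2) from hB.comp measurable_snd)]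
      exact hx.ne
    exact aux_integral_bind (η x) (Pk.comap (fun θ' => (θ', x)) measurable_prodMk_right) hg hint
  set R2 : X → ℝ := fun x => ∫ θ', s (θ', x) ∂η x with hR2_def
  have hR2_meas : Measurable R2 :=
    ((hs_meas.comp measurable_swap).stronglyMeasurable
      (f := fun r : X × Θ => s (r.2, r.1))).integral_kernel_prod_right' (κ := η) |>.measurable
  have hR2_int : Integrable R2 π.snd := by
    refine aux_int_of_lint hR2_meas (fun x => integral_nonneg fun θ' => hs0 _) ?_
    have he : ∀ᵐ x ∂π.snd, ENNReal.ofReal (R2 x) = ∫⁻ θ', ENNReal.ofReal (s (θ', x)) ∂η x :=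
      hsx_int.mono fun x hx => ofReal_integral_eq_lintegral_ofReal hx
        (Filter.Eventually.of_forall fun θ' => hs0 _)
    rw [lintegral_congr_ae he]; exact hs_lint_eta
  have hNJen : ∀ᵐ x ∂π.snd, Nf x ^ 2 ≤ R2 x := by
    filter_upwards [hux_L2, hswap_ae, hsx_int] with x h1 h2 h3
    have ha : Nf x ^ 2 ≤ ∫ θ', u (θ', x) ^ 2 ∂η x := aux_jensen h1
    have hb : ∫ θ', u (θ', x) ^ 2 ∂η x ≤ ∫ θ', s (θ', x) ∂η x :=
      integral_mono_ae h1.integrable_sq h3 h2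
    exact le_trans ha hb
  have hgN_int : Integrable (fun x => g x * Nf x) π.snd := by
    refine Integrable.mono' ((hg2.integrable_sq.add hR2_int).div_const 2)
      (hg.mul hN_meas).aestronglyMeasurable ?_
    filter_upwards [hNJen] with x hx
    have h1 := aux_abs_mul_le (g x) (Nf x)
    simp only [Pi.add_apply]
    calc ‖g x * Nf x‖ ≤ (g x ^ 2 + Nf x ^ 2) / 2 := h1
    _ ≤ (g x ^ 2 + R2 x) / 2 := by linarith
  have hΦ1 : dform π.snd (PhiX η Pk) g
      = ∫ x, g x ^ 2 ∂π.snd - ∫ x, g x * Nf x ∂π.snd := by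
    have h0 : dform π.snd (PhiX η Pk) g = ∫ x, (g x ^ 2 - g x * Nf x) ∂π.snd := by
      unfold dform
      refine integral_congr_ae ?_
      filter_upwards [hΦbind] with x hx
      rw [hx]; ring
    rw [h0, integral_sub hg2.integrable_sq hgN_int]
  have hgu_int : Integrable (fun p : Θ × X => g p.2 * u p) π := by
    refine Integrable.mono' ((hg2sq_snd.add hs_int).div_const 2)
      ((hg.comp measurable_snd).mul hu_meas).aestronglyMeasurable ?_
    filter_upwards [hπJen] with p hp
    have h1 := aux_abs_mul_le (g p.2) (u p)
    simp only [Pi.add_apply]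
    calc ‖g p.2 * u p‖ ≤ (g p.2 ^ 2 + u p ^ 2) / 2 := h1
    _ ≤ (g p.2 ^ 2 + s p) / 2 := by linarith
  have hgN_val : ∫ x, g x * Nf x ∂π.snd = ∫ p : Θ × X, g p.2 * u p ∂π := by
    have e1 : ∫ x, g x * Nf x ∂π.snd = ∫ x, ∫ θ', g x * u (θ', x) ∂η x ∂π.snd := by
      refine integral_congr_ae (Filter.Eventually.of_forall fun x => ?_)
      rw [hNf_def]; dsimp only; rw [integral_const_mul]
    rw [e1]
    exact (aux_TI2 hdis₂ (F := fun p : Θ × X => g p.2 * u p) hgu_int).symm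
  have hEform : ∀ᵐ θ ∂π.fst,
      ∫ x, g x * u (θ, x) ∂ξ θ = q θ - dform (ξ θ) (fun x => Pk (θ, x)) g := by
    filter_upwards [haeL2] with θ hθ
    obtain ⟨_, _, _, hform, _, _⟩ := aux_dformA (hsymθ θ) hg hθ
    have h5 : dform (ξ θ) (fun x => Pk (θ, x)) g = q θ - ∫ x, g x * u (θ, x) ∂ξ θ := hform
    linarith
  have hE_meas : Measurable fun θ => dform (ξ θ) (fun x => Pk (θ, x)) g := by
    have h1 : StronglyMeasurable fun r : Θ × X => g r.2 * (g r.2 - u r) :=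
      ((hg.comp measurable_snd).mul ((hg.comp measurable_snd).sub hu_meas)).stronglyMeasurable
    exact h1.integral_kernel_prod_right' (κ := ξ) |>.measurable
  have hEbounds : ∀ᵐ θ ∂π.fst, 0 ≤ varF (ξ θ) g ∧
      0 ≤ dform (ξ θ) (fun x => Pk (θ, x)) g ∧
      dform (ξ θ) (fun x => Pk (θ, x)) g ≤ 2 * varF (ξ θ) g ∧
      gapR (ξ θ) (fun x => Pk (θ, x)) * varF (ξ θ) g
        ≤ dform (ξ θ) (fun x => Pk (θ, x)) g := by
    filter_upwards [haeL2] with θ hθ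
    exact ⟨aux_varF_nonneg hθ, aux_dform_nonneg (hsymθ θ) hg hθ, aux_dform_le (hsymθ θ) hg hθ,
      aux_gap_mul (hsymθ θ) (hrev θ) hg hθ⟩
  have hE_int : Integrable (fun θ => dform (ξ θ) (fun x => Pk (θ, x)) g) π.fst := by
    refine Integrable.mono' (hq_int.const_mul 2) hE_meas.aestronglyMeasurable ?_
    filter_upwards [hEbounds] with θ h1
    obtain ⟨hv, h0, hle, _⟩ := h1
    rw [Real.norm_eq_abs, abs_of_nonneg h0]
    have h6 := hvar_eq θ
    nlinarith [sq_nonneg (m θ)]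
  have hΦ : dform π.snd (PhiX η Pk) g
      = ∫ θ, dform (ξ θ) (fun x => Pk (θ, x)) g ∂π.fst := by
    have e3 : ∫ p : Θ × X, g p.2 * u p ∂π = ∫ θ, ∫ x, g x * u (θ, x) ∂ξ θ ∂π.fst :=
      aux_TI1 hdis₁ (F := fun p : Θ × X => g p.2 * u p) hgu_int
    have e4 : ∫ θ, ∫ x, g x * u (θ, x) ∂ξ θ ∂π.fst
        = ∫ θ, (q θ - dform (ξ θ) (fun x => Pk (θ, x)) g) ∂π.fst :=
      integral_congr_ae hEform
    rw [hΦ1, hgN_val, e3, e4, integral_sub hq_int hE_int, hq_val]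
    ring
  exact ⟨hvar_int, hE_int, hΓ, hΦ, hEbounds, hΓle⟩

end Master

section Final

variable {Θ X : Type*} [MeasurableSpace Θ] [MeasurableSpace X]
  {π : Measure (Θ × X)} [IsProbabilityMeasure π]
  {ξ : Kernel Θ X} [IsMarkovKernel ξ] {η : Kernel X Θ} [IsMarkovKernel η]
  {Pk : Kernel (Θ × X) X} [IsMarkovKernel Pk]

private lemma aux_dform_smul {α : Type*} [MeasurableSpace α] (μ : Measure α)
    (K : α → Measure α) (g : α → ℝ) (a : ℝ) :
    dform μ K (fun x => a * g x) = a ^ 2 * dform μ K g := by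
  have h1 : dform μ K (fun x => a * g x)
      = ∫ x, a ^ 2 * (g x * (g x - ∫ y, g y ∂K x)) ∂μ := by
    unfold dform
    refine integral_congr_ae (Filter.Eventually.of_forall fun x => ?_)
    show a * g x * (a * g x - ∫ y, a * g y ∂K x) = a ^ 2 * (g x * (g x - ∫ y, g y ∂K x))
    rw [integral_const_mul]
    ring
  rw [h1, integral_const_mul]
  rfl

set_option maxHeartbeats 1000000 in
private lemma aux_rho_nonneg (hdis₁ : π = Measure.compProd π.fst ξ)
    (hdis₂ : π = (Measure.compProd π.snd η).map Prod.swap)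
    (hrev : ∀ θ : Θ, ∀ A B : Set X, MeasurableSet A → MeasurableSet B →
      ∫⁻ x in A, Pk (θ, x) B ∂(ξ θ) = ∫⁻ x in B, Pk (θ, x) A ∂(ξ θ)) :
    ∀ r ∈ {r : ℝ | ∃ f : X → ℝ, MemLp f 2 π.snd ∧
      0 < (∫ θ, varF (ξ θ) f ∂π.fst) ∧
      r = (∫ θ, varF (ξ θ) f * gapR (ξ θ) (fun x => Pk (θ, x)) ∂π.fst) /
          (∫ θ, varF (ξ θ) f ∂π.fst)}, 0 ≤ r := by
  rintro r ⟨f', hf', hpos, rfl⟩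
  refine div_nonneg (integral_nonneg_of_ae ?_) hpos.le
  have hfg : f' =ᵐ[π.snd] hf'.1.mk f' := hf'.1.ae_eq_mk
  have hm : Measurable (hf'.1.mk f') := hf'.1.stronglyMeasurable_mk.measurable
  have hLp : MemLp (hf'.1.mk f') 2 π.snd := hf'.ae_eq hfg
  have hsymθ : ∀ θ : Θ,
      ((ξ θ) ⊗ₘ (Pk.comap (Prod.mk θ) measurable_prodMk_left)).map Prod.swap
        = (ξ θ) ⊗ₘ (Pk.comap (Prod.mk θ) measurable_prodMk_left) :=
    fun θ => aux_symm (fun A B hA hB => hrev θ A B hA hB)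
  filter_upwards [aux_ae_eq_lift hdis₁ hfg, aux_ae_memLp hdis₁ hdis₂ hm hLp] with θ h1 h2
  have hv : varF (ξ θ) f' = varF (ξ θ) (hf'.1.mk f') := aux_varF_congr h1
  show 0 ≤ varF (ξ θ) f' * gapR (ξ θ) (fun x => Pk (θ, x))
  rw [hv]
  exact mul_nonneg (aux_varF_nonneg h2) (aux_gapR_nonneg (hsymθ θ) (hrev θ))

end Final


/-- In the Metropolis-within-Gibbs setting, for every `f ∈ L²(X, π_X)`:
`0 ≤ (var(f, Γ_x) - var_{π_X}(f))/2 ≤ var(f, Φ_x)`, and if `ϱ > 0` then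
`var(f, Φ_x) ≤ (ϱ⁻¹ - 1) var_{π_X}(f) + ϱ⁻¹ var(f, Γ_x)`. -/
theorem mwg_asymptotic_variance_comparison
    (π : Measure (Θ × X)) [IsProbabilityMeasure π]
    (ξ : Kernel Θ X) [IsMarkovKernel ξ] (η : Kernel X Θ) [IsMarkovKernel η]
    (hdis₁ : π = Measure.compProd π.fst ξ)
    (hdis₂ : π = (Measure.compProd π.snd η).map Prod.swap)
    (Pk : Kernel (Θ × X) X) [IsMarkovKernel Pk]
    (hrev : ∀ θ : Θ, ∀ A B : Set X, MeasurableSet A → MeasurableSet B →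
      ∫⁻ x in A, Pk (θ, x) B ∂(ξ θ) = ∫⁻ x in B, Pk (θ, x) A ∂(ξ θ)) :
    ∀ f : X → ℝ, MemLp f 2 π.snd →
      (0 : EReal) ≤ (avarE π.snd (GammaX η ξ) f - ((varF π.snd f : ℝ) : EReal)) / 2 ∧
      (avarE π.snd (GammaX η ξ) f - ((varF π.snd f : ℝ) : EReal)) / 2 ≤
        avarE π.snd (PhiX η Pk) f ∧
      (0 < mwgRho π ξ Pk →
        avarE π.snd (PhiX η Pk) f ≤
          ((((mwgRho π ξ Pk)⁻¹ - 1) * varF π.snd f : ℝ) : EReal) +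
            (((mwgRho π ξ Pk)⁻¹ : ℝ) : EReal) * avarE π.snd (GammaX η ξ) f) := by
  intro f hf
  have hf₀m : Measurable (hf.1.mk f) := hf.1.stronglyMeasurable_mk.measurable
  have hff₀ : f =ᵐ[π.snd] hf.1.mk f := hf.1.ae_eq_mk
  set f₀ := hf.1.mk f with hf₀def
  have hf₀2 : MemLp f₀ 2 π.snd := hf.ae_eq hff₀
  set c := ∫ t, f t ∂π.snd with hc
  have hfc : ∫ x, f₀ x ∂π.snd = c := by rw [hc]; exact (integral_congr_ae hff₀).symm
  have hv0 : 0 ≤ varF π.snd f := aux_varF_nonneg hf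
  set v := varF π.snd f with hvdef
  set SG : Set EReal := {r : EReal | ∃ g : X → ℝ, MemLp g 2 π.snd ∧ (∫ x, g x ∂π.snd) = 0 ∧
      r = ((2 * (∫ x, (f x - c) * g x ∂π.snd) - dform π.snd (GammaX η ξ) g : ℝ) : EReal)}
    with hSGdef
  set SP : Set EReal := {r : EReal | ∃ g : X → ℝ, MemLp g 2 π.snd ∧ (∫ x, g x ∂π.snd) = 0 ∧
      r = ((2 * (∫ x, (f x - c) * g x ∂π.snd) - dform π.snd (PhiX η Pk) g : ℝ) : EReal)}
    with hSPdef
  have havarG : avarE π.snd (GammaX η ξ) f = 2 * sSup SG - ((v : ℝ) : EReal) := rfl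
  have havarP : avarE π.snd (PhiX η Pk) f = 2 * sSup SP - ((v : ℝ) : EReal) := rfl
  have hKG : ∀ N : Set X, MeasurableSet N → π.snd N = 0 →
      ∀ᵐ x ∂π.snd, GammaX η ξ x N = 0 := fun N hN h0 => aux_gamma_null hdis₁ hdis₂ hN h0
  have hKP : ∀ N : Set X, MeasurableSet N → π.snd N = 0 →
      ∀ᵐ x ∂π.snd, PhiX η Pk x N = 0 := fun N hN h0 => aux_phi_null hdis₁ hdis₂ hrev hN h0
  have h0G : ((0 : ℝ) : EReal) ∈ SG := ⟨fun _ => 0, memLp_const 0, by simp, by simp [dform]⟩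
  have h0P : ((0 : ℝ) : EReal) ∈ SP := ⟨fun _ => 0, memLp_const 0, by simp, by simp [dform]⟩
  have hSG0 : (0 : EReal) ≤ sSup SG := by simpa using le_sSup h0G
  have hSP0 : (0 : EReal) ≤ sSup SP := by simpa using le_sSup h0P
  -- (E) varF ≤ sSup SG
  have hkey1 : ((v : ℝ) : EReal) ≤ sSup SG := by
    set g : X → ℝ := fun x => f₀ x - c with hgdef
    have hgm : Measurable g := hf₀m.sub measurable_const
    have hgLp : MemLp g 2 π.snd := hf₀2.sub (memLp_const c)
    have hfi : Integrable f₀ π.snd := hf₀2.integrable one_le_two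
    have hgmean : ∫ x, g x ∂π.snd = 0 := by
      rw [hgdef]
      rw [integral_sub hfi (integrable_const c)]
      simp [hfc]
    obtain ⟨_, _, _, _, _, hΓle⟩ := aux_master hdis₁ hdis₂ hrev hgm hgLp
    have hsq : ∫ x, g x ^ 2 ∂π.snd = v := by
      have e1 : ∫ x, g x ^ 2 ∂π.snd = ∫ x, (f₀ x ^ 2 - (2 * c) * f₀ x + c ^ 2) ∂π.snd :=
        integral_congr_ae (Filter.Eventually.of_forall fun x => by
          rw [hgdef]; dsimp only; ring)
      have i2 : Integrable (fun x => (2 * c) * f₀ x) π.snd := hfi.const_mul _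
      have i1 : Integrable (fun x => f₀ x ^ 2 - (2 * c) * f₀ x) π.snd :=
        (hf₀2.integrable_sq).sub i2
      rw [e1, integral_add i1 (integrable_const _),
        integral_sub hf₀2.integrable_sq i2, integral_const_mul, hfc]
      have e2 : ∫ x, f₀ x ^ 2 ∂π.snd = ∫ x, f x ^ 2 ∂π.snd :=
        (integral_congr_ae (hff₀.mono fun x hx => by simp only [hx])).symm
      have e3 : v = ∫ x, f x ^ 2 ∂π.snd - c ^ 2 := by
        rw [hvdef]; unfold varF; rw [← hc]
      rw [e2, e3]
      simp
      ring
    have hip : ∫ x, (f x - c) * g x ∂π.snd = v := by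
      have e1 : ∫ x, (f x - c) * g x ∂π.snd = ∫ x, g x ^ 2 ∂π.snd :=
        integral_congr_ae (hff₀.mono fun x hx => by rw [hgdef]; dsimp only; rw [hx]; ring)
      rw [e1, hsq]
    have hmem : ((2 * (∫ x, (f x - c) * g x ∂π.snd)
        - dform π.snd (GammaX η ξ) g : ℝ) : EReal) ∈ SG := ⟨g, hgLp, hgmean, rfl⟩
    refine le_trans ?_ (le_sSup hmem)
    rw [EReal.coe_le_coe_iff, hip]
    rw [hsq] at hΓle
    linarith
  -- (F) SG elements dominated by 2 * (elements of SP)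
  have hstep2 : ∀ r : EReal, r ∈ SG → ∃ w : ℝ, ((w : EReal) ∈ SP) ∧ r ≤ ((2 * w : ℝ) : EReal) := by
    rintro _ ⟨g, hgLp, hgmean, rfl⟩
    have hgm : Measurable (hgLp.1.mk g) := hgLp.1.stronglyMeasurable_mk.measurable
    have hgg : g =ᵐ[π.snd] hgLp.1.mk g := hgLp.1.ae_eq_mk
    set g₀ := hgLp.1.mk g with hg₀def
    have hg₀Lp : MemLp g₀ 2 π.snd := hgLp.ae_eq hgg
    have hg₀mean : ∫ x, g₀ x ∂π.snd = 0 := by rw [← integral_congr_ae hgg]; exact hgmean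
    have hdG : dform π.snd (GammaX η ξ) g = dform π.snd (GammaX η ξ) g₀ :=
      aux_dform_congr hKG hgg
    have hip : ∫ x, (f x - c) * g x ∂π.snd = ∫ x, (f x - c) * g₀ x ∂π.snd :=
      integral_congr_ae (hgg.mono fun x hx => by simp only [hx])
    obtain ⟨hvar_int, hE_int, hΓeq, hΦeq, hEb, _⟩ := aux_master hdis₁ hdis₂ hrev hgm hg₀Lp
    have hΦΓ : dform π.snd (PhiX η Pk) g₀ ≤ 2 * dform π.snd (GammaX η ξ) g₀ := by
      rw [hΓeq, hΦeq, ← integral_const_mul]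
      exact integral_mono_ae hE_int (hvar_int.const_mul 2) (hEb.mono fun θ h => h.2.2.1)
    set gH : X → ℝ := fun x => (1 / 2) * g₀ x with hgHdef
    have hgHLp : MemLp gH 2 π.snd := hg₀Lp.const_mul _
    have hgHmean : ∫ x, gH x ∂π.snd = 0 := by
      rw [hgHdef]; rw [integral_const_mul, hg₀mean]; ring
    refine ⟨2 * (∫ x, (f x - c) * gH x ∂π.snd) - dform π.snd (PhiX η Pk) gH,
      ⟨gH, hgHLp, hgHmean, rfl⟩, ?_⟩
    rw [EReal.coe_le_coe_iff]
    have hipH : ∫ x, (f x - c) * gH x ∂π.snd = (1 / 2) * ∫ x, (f x - c) * g₀ x ∂π.snd := by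
      rw [← integral_const_mul]
      refine integral_congr_ae (Filter.Eventually.of_forall fun x => ?_)
      rw [hgHdef]; dsimp only; ring
    have hdH : dform π.snd (PhiX η Pk) gH = (1 / 2) ^ 2 * dform π.snd (PhiX η Pk) g₀ :=
      aux_dform_smul _ _ _ _
    rw [hipH, hdH, hdG, hip]
    nlinarith [hΦΓ]
  -- rho facts
  have hbddρ : BddBelow {r : ℝ | ∃ f : X → ℝ, MemLp f 2 π.snd ∧
      0 < (∫ θ, varF (ξ θ) f ∂π.fst) ∧
      r = (∫ θ, varF (ξ θ) f * gapR (ξ θ) (fun x => Pk (θ, x)) ∂π.fst) /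
          (∫ θ, varF (ξ θ) f ∂π.fst)} :=
    ⟨0, fun r hr => aux_rho_nonneg hdis₁ hdis₂ hrev r hr⟩
  have hρnn : 0 ≤ mwgRho π ξ Pk := Real.sInf_nonneg (aux_rho_nonneg hdis₁ hdis₂ hrev)
  -- (G) SP elements vs SG elements scaled by rho
  have hstep3 : ∀ r : EReal, r ∈ SP → ∃ w rr : ℝ, r = (rr : EReal) ∧ ((w : EReal) ∈ SG) ∧
      mwgRho π ξ Pk * rr ≤ w := by
    rintro _ ⟨g, hgLp, hgmean, rfl⟩
    have hgm : Measurable (hgLp.1.mk g) := hgLp.1.stronglyMeasurable_mk.measurable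
    have hgg : g =ᵐ[π.snd] hgLp.1.mk g := hgLp.1.ae_eq_mk
    set g₀ := hgLp.1.mk g with hg₀def
    have hg₀Lp : MemLp g₀ 2 π.snd := hgLp.ae_eq hgg
    have hg₀mean : ∫ x, g₀ x ∂π.snd = 0 := by rw [← integral_congr_ae hgg]; exact hgmean
    have hdP : dform π.snd (PhiX η Pk) g = dform π.snd (PhiX η Pk) g₀ :=
      aux_dform_congr hKP hgg
    have hip : ∫ x, (f x - c) * g x ∂π.snd = ∫ x, (f x - c) * g₀ x ∂π.snd :=
      integral_congr_ae (hgg.mono fun x hx => by simp only [hx])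
    obtain ⟨hvar_int, hE_int, hΓeq, hΦeq, hEb, _⟩ := aux_master hdis₁ hdis₂ hrev hgm hg₀Lp
    have hVnn : 0 ≤ ∫ θ, varF (ξ θ) g₀ ∂π.fst :=
      integral_nonneg_of_ae (hEb.mono fun θ h => h.1)
    have hEnn : 0 ≤ ∫ θ, dform (ξ θ) (fun x => Pk (θ, x)) g₀ ∂π.fst :=
      integral_nonneg_of_ae (hEb.mono fun θ h => h.2.1)
    have hkey : mwgRho π ξ Pk * dform π.snd (GammaX η ξ) g₀ ≤ dform π.snd (PhiX η Pk) g₀ := by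
      rw [hΓeq, hΦeq]
      rcases hVnn.eq_or_lt with hV0 | hVpos
      · rw [← hV0, mul_zero]; exact hEnn
      · have hnum_le : (∫ θ, varF (ξ θ) g₀ * gapR (ξ θ) (fun x => Pk (θ, x)) ∂π.fst)
            ≤ ∫ θ, dform (ξ θ) (fun x => Pk (θ, x)) g₀ ∂π.fst := by
          by_cases hInt : Integrable
              (fun θ => varF (ξ θ) g₀ * gapR (ξ θ) (fun x => Pk (θ, x))) π.fst
          · exact integral_mono_ae hInt hE_int
              (hEb.mono fun θ h => by
                show varF (ξ θ) g₀ * gapR (ξ θ) (fun x => Pk (θ, x))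
                  ≤ dform (ξ θ) (fun x => Pk (θ, x)) g₀
                rw [mul_comm]; exact h.2.2.2)
          · rw [integral_undef hInt]; exact hEnn
        have hmem : (∫ θ, varF (ξ θ) g₀ * gapR (ξ θ) (fun x => Pk (θ, x)) ∂π.fst) /
            (∫ θ, varF (ξ θ) g₀ ∂π.fst) ∈ {r : ℝ | ∃ f : X → ℝ, MemLp f 2 π.snd ∧
              0 < (∫ θ, varF (ξ θ) f ∂π.fst) ∧
              r = (∫ θ, varF (ξ θ) f * gapR (ξ θ) (fun x => Pk (θ, x)) ∂π.fst) /
                  (∫ θ, varF (ξ θ) f ∂π.fst)} := ⟨g₀, hg₀Lp, hVpos, rfl⟩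
        have hle : mwgRho π ξ Pk ≤ (∫ θ, varF (ξ θ) g₀ * gapR (ξ θ)
            (fun x => Pk (θ, x)) ∂π.fst) / (∫ θ, varF (ξ θ) g₀ ∂π.fst) :=
          csInf_le hbddρ hmem
        exact le_trans ((le_div_iff₀ hVpos).1 hle) hnum_le
    set gH : X → ℝ := fun x => mwgRho π ξ Pk * g₀ x with hgHdef
    have hgHLp : MemLp gH 2 π.snd := hg₀Lp.const_mul _
    have hgHmean : ∫ x, gH x ∂π.snd = 0 := by
      rw [hgHdef]; rw [integral_const_mul, hg₀mean]; ring
    refine ⟨2 * (∫ x, (f x - c) * gH x ∂π.snd) - dform π.snd (GammaX η ξ) gH,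
      2 * (∫ x, (f x - c) * g x ∂π.snd) - dform π.snd (PhiX η Pk) g, rfl,
      ⟨gH, hgHLp, hgHmean, rfl⟩, ?_⟩
    have hipH : ∫ x, (f x - c) * gH x ∂π.snd
        = mwgRho π ξ Pk * ∫ x, (f x - c) * g₀ x ∂π.snd := by
      rw [← integral_const_mul]
      refine integral_congr_ae (Filter.Eventually.of_forall fun x => ?_)
      rw [hgHdef]; dsimp only; ring
    have hdH : dform π.snd (GammaX η ξ) gH
        = (mwgRho π ξ Pk) ^ 2 * dform π.snd (GammaX η ξ) g₀ := aux_dform_smul _ _ _ _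
    rw [hipH, hdH, hdP, hip]
    nlinarith [mul_le_mul_of_nonneg_left hkey hρnn]
  -- final EReal reasoning
  refine ⟨?_, ?_, ?_⟩
  · -- Goal 1
    rw [havarG]
    apply EReal.div_nonneg _ (by norm_num)
    by_cases htop : sSup SG = ⊤
    · rw [htop, EReal.mul_top_of_pos (by norm_num : (0 : EReal) < 2), EReal.top_sub_coe,
        EReal.top_sub_coe]
      exact le_top
    · obtain ⟨Sr, hSr⟩ : ∃ r : ℝ, sSup SG = (r : EReal) :=
        ⟨(sSup SG).toReal, (EReal.coe_toReal htop (by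
          rintro hbot; rw [hbot] at hSG0; exact absurd hSG0 (by simp))).symm⟩
      rw [hSr] at hkey1 ⊢
      rw [EReal.coe_le_coe_iff] at hkey1
      have e : (2 * ((Sr : ℝ) : EReal) - ((v : ℝ) : EReal) - ((v : ℝ) : EReal))
          = ((2 * Sr - v - v : ℝ) : EReal) := by norm_cast
      rw [e]
      exact_mod_cast (by linarith : (0 : ℝ) ≤ 2 * Sr - v - v)
  · -- Goal 2
    rw [havarG, havarP]
    by_cases htopP : sSup SP = ⊤
    · rw [htopP, EReal.mul_top_of_pos (by norm_num : (0 : EReal) < 2), EReal.top_sub_coe]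
      exact le_top
    · obtain ⟨Tr, hTr⟩ : ∃ r : ℝ, sSup SP = (r : EReal) :=
        ⟨(sSup SP).toReal, (EReal.coe_toReal htopP (by
          rintro hbot; rw [hbot] at hSP0; exact absurd hSP0 (by simp))).symm⟩
      have hTub : ∀ r ∈ SG, r ≤ ((2 * Tr : ℝ) : EReal) := by
        intro r hr
        obtain ⟨w, hwmem, hrle⟩ := hstep2 r hr
        have hwle : (w : EReal) ≤ (Tr : EReal) := by rw [← hTr]; exact le_sSup hwmem
        rw [EReal.coe_le_coe_iff] at hwle
        exact hrle.trans (by exact_mod_cast (by linarith : (2 * w : ℝ) ≤ 2 * Tr))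
      have hSle : sSup SG ≤ ((2 * Tr : ℝ) : EReal) := sSup_le hTub
      have htopG : sSup SG ≠ ⊤ := by
        intro h; rw [h] at hSle; exact EReal.coe_ne_top _ (top_le_iff.1 hSle)
      obtain ⟨Sr, hSr⟩ : ∃ r : ℝ, sSup SG = (r : EReal) :=
        ⟨(sSup SG).toReal, (EReal.coe_toReal htopG (by
          rintro hbot; rw [hbot] at hSG0; exact absurd hSG0 (by simp))).symm⟩
      rw [hSr] at hSle
      rw [EReal.coe_le_coe_iff] at hSle
      rw [hSr, hTr]
      have eL : (2 * ((Sr : ℝ) : EReal) - ((v : ℝ) : EReal) - ((v : ℝ) : EReal)) / 2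
          = (((2 * Sr - v - v) / 2 : ℝ) : EReal) := by norm_cast
      have eR : (2 * ((Tr : ℝ) : EReal) - ((v : ℝ) : EReal))
          = ((2 * Tr - v : ℝ) : EReal) := by norm_cast
      rw [eL, eR, EReal.coe_le_coe_iff]
      linarith
  · -- Goal 3
    intro hρ
    rw [havarG, havarP]
    by_cases htopG : sSup SG = ⊤
    · rw [htopG, EReal.mul_top_of_pos (by norm_num : (0 : EReal) < 2), EReal.top_sub_coe,
        EReal.coe_mul_top_of_pos (inv_pos.2 hρ)]
      rw [EReal.coe_add_top]
      exact le_top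
    · obtain ⟨Sr, hSr⟩ : ∃ r : ℝ, sSup SG = (r : EReal) :=
        ⟨(sSup SG).toReal, (EReal.coe_toReal htopG (by
          rintro hbot; rw [hbot] at hSG0; exact absurd hSG0 (by simp))).symm⟩
      have hTub : ∀ r ∈ SP, r ≤ (((mwgRho π ξ Pk)⁻¹ * Sr : ℝ) : EReal) := by
        intro r hr
        obtain ⟨w, rr, hreq, hwmem, hrle⟩ := hstep3 r hr
        have hwle : (w : EReal) ≤ (Sr : EReal) := by rw [← hSr]; exact le_sSup hwmem
        rw [EReal.coe_le_coe_iff] at hwle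
        rw [hreq, EReal.coe_le_coe_iff]
        calc rr = (mwgRho π ξ Pk)⁻¹ * (mwgRho π ξ Pk * rr) := by field_simp
        _ ≤ (mwgRho π ξ Pk)⁻¹ * Sr :=
            mul_le_mul_of_nonneg_left (le_trans hrle hwle) (inv_nonneg.2 hρ.le)
      have hTle : sSup SP ≤ (((mwgRho π ξ Pk)⁻¹ * Sr : ℝ) : EReal) := sSup_le hTub
      have htopP : sSup SP ≠ ⊤ := by
        intro h; rw [h] at hTle; exact EReal.coe_ne_top _ (top_le_iff.1 hTle)
      obtain ⟨Tr, hTr⟩ : ∃ r : ℝ, sSup SP = (r : EReal) :=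
        ⟨(sSup SP).toReal, (EReal.coe_toReal htopP (by
          rintro hbot; rw [hbot] at hSP0; exact absurd hSP0 (by simp))).symm⟩
      rw [hTr] at hTle
      rw [EReal.coe_le_coe_iff] at hTle
      rw [hSr, hTr]
      have eL : (2 * ((Tr : ℝ) : EReal) - ((v : ℝ) : EReal))
          = ((2 * Tr - v : ℝ) : EReal) := by norm_cast
      have eR : ((((mwgRho π ξ Pk)⁻¹ - 1) * v : ℝ) : EReal)
          + (((mwgRho π ξ Pk)⁻¹ : ℝ) : EReal) * (2 * ((Sr : ℝ) : EReal) - ((v : ℝ) : EReal))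
          = ((((mwgRho π ξ Pk)⁻¹ - 1) * v + (mwgRho π ξ Pk)⁻¹ * (2 * Sr - v) : ℝ) : EReal) := by
        norm_cast
      rw [eL, eR, EReal.coe_le_coe_iff]
      nlinarith [hTle]
end

section
/- In the Metropolis-within-Gibbs setting, for every f ∈ L²(Θ,π_Θ), viewed as a function on Θ×X depending only on θ, and every k ≥ 1: ⟨f, Φ^k f⟩_π = ⟨f̄, Φ_x^{k−1} f̄⟩_{π_X}, where f̄(x) := ∫_Θ f(θ) η(x,dθ). Consequently, if the series var(f̄,Φ_x) := var_{π_X}(f̄) + 2 Σ_{k=1}^∞ ⟨f̄ − π_X(f̄), Φ_x^k (f̄ − π_X(f̄))⟩_{π_X} converges, then the series defining var(f,Φ) := var_{π_Θ}(f) + 2 Σ_{k=1}^∞ ⟨f − π_Θ(f), Φ^k (f − π_Θ(f))⟩_π converges and var(f,Φ) = var_{π_Θ}(f) + var_{π_X}(f̄) + var(f̄,Φ_x). -/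
open MeasureTheory ProbabilityTheory
open scoped ENNReal

/-- Iterates of a Markov transition `P : α → Measure α`. -/
noncomputable def iterFun {α : Type*} [MeasurableSpace α] (P : α → Measure α) :
    ℕ → α → Measure α
  | 0 => fun x => Measure.dirac x
  | (n + 1) => fun x => (P x).bind (iterFun P n)

variable {Θ X : Type*} [MeasurableSpace Θ] [MeasurableSpace X]

/-- The Metropolis-within-Gibbs kernel on `Θ × X`:
`Φ(θ₀, x; dθ × dy) = η(x, dθ) Π_θ(x, dy)`. -/
noncomputable def PhiFull (η : Kernel X Θ) (Pk : Kernel (Θ × X) X)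
    (p : Θ × X) : Measure (Θ × X) :=
  (η p.2).bind (fun θ => (Pk (θ, p.2)).map (fun y => (θ, y)))

namespace MwGAux

variable {α β γ : Type*} [MeasurableSpace α] [MeasurableSpace β] [MeasurableSpace γ]

lemma bind_map (μ : Measure α) {g : α → β} (hg : Measurable g)
    {F : β → Measure γ} (hF : Measurable F) :
    (μ.map g).bind F = μ.bind (fun a => F (g a)) := by
  ext s hs
  have hFs : Measurable fun b => F b s := (Measure.measurable_coe hs).comp hF
  have hFg : Measurable fun a => F (g a) := hF.comp hg
  rw [Measure.bind_apply hs hF.aemeasurable, lintegral_map hFs hg, Measure.bind_apply hs hFg.aemeasurable]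

lemma map_bind (μ : Measure α) {K : α → Measure β} (hK : Measurable K)
    {g : β → γ} (hg : Measurable g) :
    (μ.bind K).map g = μ.bind (fun a => (K a).map g) := by
  ext s hs
  have hKg : Measurable fun a => (K a).map g := (Measure.measurable_map _ hg).comp hK
  rw [Measure.map_apply hg hs, Measure.bind_apply (hg hs) hK.aemeasurable, Measure.bind_apply hs hKg.aemeasurable]
  refine lintegral_congr fun a => ?_
  rw [Measure.map_apply hg hs]

noncomputable def kpow (K : Kernel α α) : ℕ → Kernel α α
  | 0 => Kernel.id
  | n + 1 => (kpow K n) ∘ₖ K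

instance instKpowMarkov (K : Kernel α α) [IsMarkovKernel K] :
    ∀ n, IsMarkovKernel (kpow K n)
  | 0 => by rw [kpow]; infer_instance
  | (n + 1) => by rw [kpow]; have := instKpowMarkov K n; infer_instance

lemma iterFun_eq (K : Kernel α α) (P : α → Measure α) (hP : ∀ a, P a = K a) :
    ∀ n, _root_.iterFun P n = fun a => kpow K n a
  | 0 => by funext a; simp [iterFun, kpow, Kernel.id_apply]
  | (n + 1) => by
      funext a
      show (P a).bind (iterFun P n) = (kpow K (n + 1)) a
      rw [iterFun_eq K P hP n, hP, kpow, Kernel.comp_apply]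

lemma sq_integral_le (μ : Measure β) [IsProbabilityMeasure μ] {u : β → ℝ}
    (hu : MemLp u 2 μ) : (∫ x, u x ∂μ) ^ 2 ≤ ∫ x, u x ^ 2 ∂μ := by
  have h1 : Integrable u μ := hu.integrable one_le_two
  have h2 : Integrable (fun x => u x ^ 2) μ := hu.integrable_sq
  set c := ∫ x, u x ∂μ with hc
  have h3 : 0 ≤ ∫ x, (u x - c) ^ 2 ∂μ := integral_nonneg fun x => sq_nonneg _
  have h4 : ∫ x, (u x - c) ^ 2 ∂μ = ∫ x, u x ^ 2 ∂μ - c ^ 2 := by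
    have e1 : ∀ x, (u x - c) ^ 2 = u x ^ 2 - (2 * c) * u x + c ^ 2 := fun x => by ring
    rw [integral_congr_ae (Filter.Eventually.of_forall e1)]
    have hB : Integrable (fun x => 2 * c * u x) μ := h1.const_mul (2 * c)
    have hA : Integrable (fun x => u x ^ 2 - 2 * c * u x) μ := h2.sub hB
    rw [integral_add hA (integrable_const _), integral_sub h2 hB, integral_const_mul,
      integral_const]
    simp [← hc]
    ring
  nlinarith [h3, h4]

lemma integrable_mul_of_memL2 {μ : Measure β} {u v : β → ℝ}
    (hu : MemLp u 2 μ) (hv : MemLp v 2 μ) :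
    Integrable (fun x => u x * v x) μ := by
  refine Integrable.mono' ((hu.integrable_sq.add hv.integrable_sq).div_const 2)
    (hu.aestronglyMeasurable.mul hv.aestronglyMeasurable)
    (Filter.Eventually.of_forall fun x => ?_)
  rw [Real.norm_eq_abs, abs_mul]
  simp only [Pi.add_apply]
  nlinarith [sq_nonneg (|u x| - |v x|), sq_abs (u x), sq_abs (v x), abs_nonneg (u x),
    abs_nonneg (v x), mul_nonneg (abs_nonneg (u x)) (abs_nonneg (v x))]

lemma bind_eq_map_snd (μ : Measure α) [SFinite μ] (κ : Kernel α β) [IsSFiniteKernel κ] :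
    μ.bind (fun a => κ a) = (μ ⊗ₘ κ).map Prod.snd := by
  ext s hs
  rw [Measure.bind_apply hs (Kernel.measurable κ).aemeasurable, Measure.map_apply measurable_snd hs,
    Measure.compProd_apply (measurable_snd hs)]
  rfl

lemma integral_bind (μ : Measure α) [SFinite μ] (κ : Kernel α β) [IsSFiniteKernel κ]
    {g : β → ℝ} (hg : StronglyMeasurable g)
    (hint : Integrable g (μ.bind (fun a => κ a))) :
    ∫ b, g b ∂(μ.bind (fun a => κ a)) = ∫ a, ∫ b, g b ∂(κ a) ∂μ := by
  rw [bind_eq_map_snd] at hint ⊢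
  rw [integral_map measurable_snd.aemeasurable hg.aestronglyMeasurable]
  exact Measure.integral_compProd
    ((integrable_map_measure hg.aestronglyMeasurable measurable_snd.aemeasurable).mp hint)

lemma bind_kpow (K : Kernel α α) [IsMarkovKernel K] (μ : Measure α)
    (hinv : μ.bind (fun a => K a) = μ) :
    ∀ n, μ.bind (fun a => kpow K n a) = μ
  | 0 => by
      have : (fun a => kpow K 0 a) = fun a : α => Measure.dirac a :=
        funext fun a => by rw [kpow, Kernel.id_apply]
      rw [this]
      exact Measure.bind_dirac
  | (n + 1) => by
      have : (fun a => kpow K (n + 1) a) = fun a => (K a).bind (fun b => kpow K n b) :=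
        funext fun a => by rw [kpow, Kernel.comp_apply]
      rw [this, ← Measure.bind_bind (Kernel.measurable K).aemeasurable (Kernel.measurable _).aemeasurable, hinv,
        bind_kpow K μ hinv n]

lemma lintegral_kpow (K : Kernel α α) [IsMarkovKernel K] (μ : Measure α)
    (hinv : μ.bind (fun a => K a) = μ) (n : ℕ) {w : α → ℝ≥0∞} (hw : Measurable w) :
    ∫⁻ a, ∫⁻ b, w b ∂(kpow K n a) ∂μ = ∫⁻ b, w b ∂μ := by
  rw [← Measure.lintegral_bind (Kernel.measurable _).aemeasurable hw.aemeasurable, bind_kpow K μ hinv n]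

lemma kpow_null (K : Kernel α α) [IsMarkovKernel K] (μ : Measure α)
    (hinv : μ.bind (fun a => K a) = μ) (n : ℕ) {M : Set α} (hM : MeasurableSet M)
    (h0 : μ M = 0) : ∀ᵐ a ∂μ, kpow K n a M = 0 := by
  have h1 : ∫⁻ a, kpow K n a M ∂μ = 0 := by
    have := lintegral_kpow K μ hinv n (w := M.indicator 1)
      (measurable_one.indicator hM)
    simp_rw [lintegral_indicator_one hM] at this
    rw [this, h0]
  exact (lintegral_eq_zero_iff (Kernel.measurable_coe _ hM)).mp h1

end MwGAux

namespace MwGAux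

variable {α β γ : Type*} [MeasurableSpace α] [MeasurableSpace β] [MeasurableSpace γ]

lemma ae_integrable_kernel (κ : Kernel α β) [IsMarkovKernel κ] (μ : Measure α)
    (νμ : Measure β) (hbind : μ.bind (fun a => κ a) = νμ) {v : β → ℝ}
    (hvsm : StronglyMeasurable v) (hv : Integrable v νμ) :
    ∀ᵐ a ∂μ, Integrable v (κ a) := by
  have hw : Measurable fun b => (‖v b‖₊ : ℝ≥0∞) := hvsm.measurable.nnnorm.coe_nnreal_ennreal
  have h1 : ∫⁻ a, ∫⁻ b, (‖v b‖₊ : ℝ≥0∞) ∂(κ a) ∂μ = ∫⁻ b, (‖v b‖₊ : ℝ≥0∞) ∂νμ := by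
    rw [← Measure.lintegral_bind (Kernel.measurable κ).aemeasurable hw.aemeasurable, hbind]
  have h2 : ∫⁻ a, ∫⁻ b, (‖v b‖₊ : ℝ≥0∞) ∂(κ a) ∂μ < ⊤ := by
    rw [h1]; exact hv.2
  have h3 : ∀ᵐ a ∂μ, ∫⁻ b, (‖v b‖₊ : ℝ≥0∞) ∂(κ a) < ⊤ :=
    ae_lt_top ((hw.comp measurable_snd).lintegral_kernel_prod_right') h2.ne
  filter_upwards [h3] with a ha
  exact ⟨hvsm.aestronglyMeasurable, ha⟩

lemma memL2_kernel (κ : Kernel α β) [IsMarkovKernel κ] (μ : Measure α) (νμ : Measure β)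
    [IsProbabilityMeasure νμ] (hbind : μ.bind (fun a => κ a) = νμ) {v : β → ℝ}
    (hvsm : StronglyMeasurable v) (hv : MemLp v 2 νμ) :
    MemLp (fun a => ∫ b, v b ∂(κ a)) 2 μ := by
  have hv2sm : StronglyMeasurable fun b => v b ^ 2 :=
    (hvsm.measurable.pow_const 2).stronglyMeasurable
  have hsm : StronglyMeasurable fun a => ∫ b, v b ∂(κ a) :=
    (hvsm.comp_measurable measurable_snd).integral_kernel_prod_right'
  have hHsm : StronglyMeasurable fun a => ∫ b, v b ^ 2 ∂(κ a) :=
    (hv2sm.comp_measurable measurable_snd).integral_kernel_prod_right'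
  have hv2 : Integrable (fun b => v b ^ 2) νμ := hv.integrable_sq
  have haeI : ∀ᵐ a ∂μ, Integrable (fun b => v b ^ 2) (κ a) :=
    ae_integrable_kernel κ μ νμ hbind hv2sm hv2
  have haeV : ∀ᵐ a ∂μ, Integrable v (κ a) :=
    ae_integrable_kernel κ μ νμ hbind hvsm (hv.integrable one_le_two)
  have hHint : Integrable (fun a => ∫ b, v b ^ 2 ∂(κ a)) μ := by
    refine ⟨hHsm.aestronglyMeasurable, ?_⟩
    have hb : ∀ a, (‖∫ b, v b ^ 2 ∂(κ a)‖₊ : ℝ≥0∞) ≤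
        ∫⁻ b, ENNReal.ofReal (v b ^ 2) ∂(κ a) := by
      intro a
      by_cases hin : Integrable (fun b => v b ^ 2) (κ a)
      · rw [← enorm_eq_nnnorm, Real.enorm_eq_ofReal (integral_nonneg fun b => sq_nonneg _),
          ← ofReal_integral_eq_lintegral_ofReal hin
            (Filter.Eventually.of_forall fun b => sq_nonneg _)]
      · rw [integral_undef hin]; simp
    have hmw : Measurable fun b => ENNReal.ofReal (v b ^ 2) :=
      (hvsm.measurable.pow_const 2).ennreal_ofReal
    calc ∫⁻ a, (‖∫ b, v b ^ 2 ∂(κ a)‖₊ : ℝ≥0∞) ∂μ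
        ≤ ∫⁻ a, ∫⁻ b, ENNReal.ofReal (v b ^ 2) ∂(κ a) ∂μ := lintegral_mono hb
      _ = ∫⁻ b, ENNReal.ofReal (v b ^ 2) ∂νμ := by
          rw [← Measure.lintegral_bind (Kernel.measurable κ).aemeasurable hmw.aemeasurable, hbind]
      _ < ⊤ := by
          rw [← ofReal_integral_eq_lintegral_ofReal hv2
            (Filter.Eventually.of_forall fun b => sq_nonneg _)]
          exact ENNReal.ofReal_lt_top
  refine (memLp_two_iff_integrable_sq hsm.aestronglyMeasurable).mpr ?_
  refine Integrable.mono' hHint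
    ((hsm.measurable.pow_const 2).stronglyMeasurable).aestronglyMeasurable ?_
  filter_upwards [haeI, haeV] with a hIa hVa
  rw [Real.norm_eq_abs, abs_of_nonneg (sq_nonneg _)]
  exact sq_integral_le (κ a) ((memLp_two_iff_integrable_sq hvsm.aestronglyMeasurable).mpr hIa)

end MwGAux

namespace MwG

open MwGAux

noncomputable def lamK (Pk : Kernel (Θ × X) X) : Kernel (Θ × X) (Θ × X) :=
  (Kernel.deterministic Prod.fst measurable_fst) ×ₖ Pk

noncomputable def kEmb (η : Kernel X Θ) : Kernel X (Θ × X) := η ×ₖ Kernel.id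

noncomputable def kPsi (η : Kernel X Θ) (Pk : Kernel (Θ × X) X) : Kernel X (Θ × X) :=
  lamK Pk ∘ₖ kEmb η

noncomputable def kX (η : Kernel X Θ) (Pk : Kernel (Θ × X) X) : Kernel X X :=
  Pk ∘ₖ kEmb η

noncomputable def kF (η : Kernel X Θ) (Pk : Kernel (Θ × X) X) : Kernel (Θ × X) (Θ × X) :=
  (kPsi η Pk).comap Prod.snd measurable_snd

variable (η : Kernel X Θ) (Pk : Kernel (Θ × X) X) [IsMarkovKernel η] [IsMarkovKernel Pk]

instance : IsMarkovKernel (lamK Pk) := by rw [lamK]; infer_instance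
instance : IsMarkovKernel (kEmb η) := by rw [kEmb]; infer_instance
instance : IsMarkovKernel (kPsi η Pk) := by rw [kPsi]; infer_instance
instance : IsMarkovKernel (kX η Pk) := by rw [kX]; infer_instance
instance : IsMarkovKernel (kF η Pk) := by
  rw [kF]; infer_instance

lemma lamK_apply (p : Θ × X) : lamK Pk p = (Pk p).map (Prod.mk p.1) := by
  rw [lamK, Kernel.prod_apply, Kernel.deterministic_apply, Measure.dirac_prod]

lemma kEmb_apply (x : X) : kEmb η x = (η x).map (fun θ => (θ, x)) := by
  rw [kEmb, Kernel.prod_apply, Kernel.id_apply, Measure.prod_dirac]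

lemma kPsi_apply (x : X) : kPsi η Pk x = (η x).bind (fun θ => lamK Pk (θ, x)) := by
  rw [kPsi, Kernel.comp_apply, kEmb_apply,
    bind_map _ measurable_prodMk_right (Kernel.measurable (lamK Pk))]

lemma kX_apply (x : X) : kX η Pk x = PhiX η Pk x := by
  rw [kX, Kernel.comp_apply, kEmb_apply,
    bind_map _ measurable_prodMk_right (Kernel.measurable Pk), PhiX]

lemma kF_apply (p : Θ × X) : kF η Pk p = PhiFull η Pk p := by
  rw [kF, Kernel.comap_apply, kPsi_apply, PhiFull]
  congr 1
  funext θ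
  rw [lamK_apply]

lemma measurable_lamK_mk (x : X) : Measurable fun θ : Θ => lamK Pk (θ, x) :=
  (Kernel.measurable (lamK Pk)).comp measurable_prodMk_right

lemma kPsi_map_fst (x : X) : (kPsi η Pk x).map Prod.fst = η x := by
  rw [kPsi_apply, map_bind _ (measurable_lamK_mk Pk x) measurable_fst]
  have h : (fun θ : Θ => (lamK Pk (θ, x)).map Prod.fst) = fun θ => Measure.dirac θ := by
    funext θ
    rw [lamK_apply, Measure.map_map measurable_fst measurable_prodMk_left]
    have h2 : (Prod.fst ∘ Prod.mk θ : X → Θ) = fun _ => θ := rfl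
    rw [h2, Measure.map_const, measure_univ, one_smul]
  rw [h]
  exact Measure.bind_dirac

lemma kPsi_map_snd (x : X) : (kPsi η Pk x).map Prod.snd = kX η Pk x := by
  rw [kPsi_apply, map_bind _ (measurable_lamK_mk Pk x) measurable_snd, kX_apply, PhiX]
  congr 1
  funext θ
  rw [lamK_apply, Measure.map_map measurable_snd measurable_prodMk_left]
  have : (Prod.snd ∘ Prod.mk θ : X → X) = id := rfl
  rw [this, Measure.map_id]

lemma kF_pow : ∀ (k : ℕ) (p : Θ × X),
    kpow (kF η Pk) (k + 1) p = (kpow (kX η Pk) k p.2).bind (fun y => kPsi η Pk y)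
  | 0, p => by
      have h1 : kpow (kF η Pk) 1 = kF η Pk := by
        show kpow (kF η Pk) 0 ∘ₖ kF η Pk = kF η Pk
        rw [show kpow (kF η Pk) 0 = Kernel.id from rfl, Kernel.id_comp]
      rw [h1, show kpow (kX η Pk) 0 = Kernel.id from rfl, Kernel.id_apply,
        Measure.dirac_bind (Kernel.measurable (kPsi η Pk)), kF, Kernel.comap_apply]
  | (k + 1), p => by
      have h1 : kpow (kF η Pk) (k + 2) p
          = (kPsi η Pk p.2).bind (fun q => kpow (kF η Pk) (k + 1) q) := by
        rw [show kpow (kF η Pk) (k + 2) = kpow (kF η Pk) (k + 1) ∘ₖ kF η Pk from rfl,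
          Kernel.comp_apply, kF, Kernel.comap_apply]
      rw [h1]
      have h2 : (fun q : Θ × X => kpow (kF η Pk) (k + 1) q)
          = fun q => (kPsi η Pk ∘ₖ kpow (kX η Pk) k) q.2 := by
        funext q; rw [kF_pow k q, Kernel.comp_apply]
      rw [h2]
      have h3 : (kPsi η Pk p.2).bind (fun q : Θ × X => (kPsi η Pk ∘ₖ kpow (kX η Pk) k) q.2)
          = ((kPsi η Pk p.2).map Prod.snd).bind
            (fun y => (kPsi η Pk ∘ₖ kpow (kX η Pk) k) y) :=
        (bind_map _ measurable_snd (Kernel.measurable _)).symm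
      rw [h3, kPsi_map_snd]
      have h4 : (fun y => (kPsi η Pk ∘ₖ kpow (kX η Pk) k) y)
          = fun y => (kpow (kX η Pk) k y).bind (fun z => kPsi η Pk z) := by
        funext y; rw [Kernel.comp_apply]
      rw [h4, ← Measure.bind_bind (Kernel.measurable (kpow (kX η Pk) k)).aemeasurable
        (Kernel.measurable (kPsi η Pk)).aemeasurable]
      have h5 : kpow (kX η Pk) (k + 1) p.2 = (kX η Pk p.2).bind (fun y => kpow (kX η Pk) k y) := by
        rw [show kpow (kX η Pk) (k + 1) = kpow (kX η Pk) k ∘ₖ kX η Pk from rfl,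
          Kernel.comp_apply]
      rw [h5]

variable (π : Measure (Θ × X)) [IsProbabilityMeasure π] (ξ : Kernel Θ X) [IsMarkovKernel ξ]

lemma lintegral_dis₂ (hdis₂ : π = (Measure.compProd π.snd η).map Prod.swap)
    {F : Θ × X → ℝ≥0∞} (hF : Measurable F) :
    ∫⁻ p, F p ∂π = ∫⁻ x, ∫⁻ θ, F (θ, x) ∂(η x) ∂π.snd := by
  conv_lhs => rw [hdis₂]
  rw [lintegral_map hF measurable_swap,
    Measure.lintegral_compProd (f := fun z : X × Θ => F z.swap) (hF.comp measurable_swap)]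
  rfl

lemma lintegral_dis₁ (hdis₁ : π = Measure.compProd π.fst ξ)
    {F : Θ × X → ℝ≥0∞} (hF : Measurable F) :
    ∫⁻ p, F p ∂π = ∫⁻ θ, ∫⁻ x, F (θ, x) ∂(ξ θ) ∂π.fst := by
  conv_lhs => rw [hdis₁]
  rw [Measure.lintegral_compProd hF]

lemma bind_eta (hdis₂ : π = (Measure.compProd π.snd η).map Prod.swap) :
    π.snd.bind (fun x => η x) = π.fst := by
  ext s hs
  rw [Measure.bind_apply hs (Kernel.measurable η).aemeasurable, Measure.fst_apply hs]
  conv_rhs => rw [hdis₂]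
  rw [Measure.map_apply measurable_swap (measurable_fst hs)]
  have hset : Prod.swap ⁻¹' (Prod.fst ⁻¹' s) = (Prod.snd : X × Θ → Θ) ⁻¹' s := rfl
  rw [hset, Measure.compProd_apply (measurable_snd hs)]
  rfl

lemma bind_kX_inv (hdis₁ : π = Measure.compProd π.fst ξ)
    (hdis₂ : π = (Measure.compProd π.snd η).map Prod.swap)
    (hrev : ∀ θ : Θ, ∀ A B : Set X, MeasurableSet A → MeasurableSet B →
      ∫⁻ x in A, Pk (θ, x) B ∂(ξ θ) = ∫⁻ x in B, Pk (θ, x) A ∂(ξ θ)) :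
    π.snd.bind (fun x => kX η Pk x) = π.snd := by
  ext s hs
  rw [Measure.bind_apply hs (Kernel.measurable _).aemeasurable]
  have hkxs : ∀ x, kX η Pk x s = ∫⁻ θ, Pk (θ, x) s ∂η x := fun x => by
    have hmx : Measurable fun θ : Θ => Pk (θ, x) :=
      (Kernel.measurable Pk).comp measurable_prodMk_right
    rw [kX_apply, PhiX, Measure.bind_apply hs hmx.aemeasurable]
  simp_rw [hkxs]
  rw [← lintegral_dis₂ η π hdis₂ (F := fun p => Pk p s) (Kernel.measurable_coe Pk hs),
    lintegral_dis₁ π ξ hdis₁ (F := fun p => Pk p s) (Kernel.measurable_coe Pk hs)]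
  have hstep : ∀ θ, ∫⁻ x, Pk (θ, x) s ∂ξ θ = ξ θ s := fun θ => by
    have h1 := hrev θ Set.univ s MeasurableSet.univ hs
    rw [Measure.restrict_univ] at h1
    rw [h1]
    have h2 : ∀ x ∈ s, Pk (θ, x) Set.univ = (1 : ℝ≥0∞) := fun x _ => measure_univ
    rw [setLIntegral_congr_fun hs h2]
    simp
  simp_rw [hstep]
  rw [Measure.snd_apply hs]
  conv_rhs => rw [hdis₁]
  rw [Measure.compProd_apply (measurable_snd hs)]
  rfl

end MwG

open MwGAux MwG in
/-- For `f ∈ L²(Θ, π_Θ)` and `k ≥ 1`, `⟨f, Φ^k f⟩_π = ⟨f̄, Φ_x^{k-1} f̄⟩_{π_X}` where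
`f̄(x) = ∫ f(θ) η(x, dθ)`; consequently, convergence of the autocovariance series of `f̄` for
`Φ_x` implies convergence of the autocovariance series of `f` for `Φ`, with
`var(f, Φ) = var_{π_Θ}(f) + var_{π_X}(f̄) + var(f̄, Φ_x)`. -/
theorem mwg_theta_variance_decomposition
    (π : Measure (Θ × X)) [IsProbabilityMeasure π]
    (ξ : Kernel Θ X) [IsMarkovKernel ξ] (η : Kernel X Θ) [IsMarkovKernel η]
    (hdis₁ : π = Measure.compProd π.fst ξ)
    (hdis₂ : π = (Measure.compProd π.snd η).map Prod.swap)
    (Pk : Kernel (Θ × X) X) [IsMarkovKernel Pk]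
    (hrev : ∀ θ : Θ, ∀ A B : Set X, MeasurableSet A → MeasurableSet B →
      ∫⁻ x in A, Pk (θ, x) B ∂(ξ θ) = ∫⁻ x in B, Pk (θ, x) A ∂(ξ θ))
    (f : Θ → ℝ) (hf : MemLp f 2 π.fst) :
    (∀ k : ℕ, 1 ≤ k →
      (∫ p, f p.1 * ∫ q, f q.1 ∂(iterFun (PhiFull η Pk) k p) ∂π) =
        ∫ x, (∫ θ, f θ ∂(η x)) *
          ∫ y, (∫ θ, f θ ∂(η y)) ∂(iterFun (PhiX η Pk) (k - 1) x) ∂π.snd) ∧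
    (Summable (fun k : ℕ =>
        ∫ x, ((∫ θ, f θ ∂(η x)) - ∫ t, (∫ θ, f θ ∂(η t)) ∂π.snd) *
          ∫ y, ((∫ θ, f θ ∂(η y)) - ∫ t, (∫ θ, f θ ∂(η t)) ∂π.snd)
            ∂(iterFun (PhiX η Pk) (k + 1) x) ∂π.snd) →
      Summable (fun k : ℕ =>
        ∫ p, (f p.1 - ∫ t, f t ∂π.fst) *
          ∫ q, (f q.1 - ∫ t, f t ∂π.fst) ∂(iterFun (PhiFull η Pk) (k + 1) p) ∂π) ∧
      varF π.fst f + 2 * (∑' k : ℕ,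
          ∫ p, (f p.1 - ∫ t, f t ∂π.fst) *
            ∫ q, (f q.1 - ∫ t, f t ∂π.fst) ∂(iterFun (PhiFull η Pk) (k + 1) p) ∂π) =
        varF π.fst f + varF π.snd (fun x => ∫ θ, f θ ∂(η x)) +
          (varF π.snd (fun x => ∫ θ, f θ ∂(η x)) + 2 * ∑' k : ℕ,
            ∫ x, ((∫ θ, f θ ∂(η x)) - ∫ t, (∫ θ, f θ ∂(η t)) ∂π.snd) *
              ∫ y, ((∫ θ, f θ ∂(η y)) - ∫ t, (∫ θ, f θ ∂(η t)) ∂π.snd)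
                ∂(iterFun (PhiX η Pk) (k + 1) x) ∂π.snd)) := by
  classical
  have hKXinv : π.snd.bind (fun x => kX η Pk x) = π.snd :=
    bind_kX_inv η Pk π ξ hdis₁ hdis₂ hrev
  have hbindη : π.snd.bind (fun x => η x) = π.fst := bind_eta η π hdis₂
  set ν := π.snd with hν
  set μΘ := π.fst with hμΘ
  haveI hνP : IsProbabilityMeasure ν := by rw [hν]; infer_instance
  haveI hμP : IsProbabilityMeasure μΘ := by rw [hμΘ]; infer_instance
  have hIX : ∀ n, iterFun (PhiX η Pk) n = fun x => kpow (kX η Pk) n x :=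
    iterFun_eq _ _ (fun x => (kX_apply η Pk x).symm)
  have hIF : ∀ n, iterFun (PhiFull η Pk) n = fun p => kpow (kF η Pk) n p :=
    iterFun_eq _ _ (fun p => (kF_apply η Pk p).symm)
  have haesnd : ∀ {Q : X → Prop}, (∀ᵐ x ∂ν, Q x) → (∀ᵐ p ∂π, Q p.2) := by
    intro Q h
    have h' : ∀ᵐ x ∂(π.map Prod.snd), Q x := h
    exact ae_of_ae_map measurable_snd.aemeasurable h'
  have ηNull : ∀ {M : Set Θ}, MeasurableSet M → μΘ M = 0 → ∀ᵐ x ∂ν, η x M = 0 := by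
    intro M hM h0
    have h1 : ∫⁻ x, η x M ∂ν = 0 := by
      rw [← Measure.bind_apply hM (Kernel.measurable η).aemeasurable, hbindη, h0]
    exact (lintegral_eq_zero_iff (Kernel.measurable_coe η hM)).mp h1
  have ηkNull : ∀ (m : ℕ) {M : Set Θ}, MeasurableSet M → μΘ M = 0 →
      ∀ᵐ x ∂ν, ((kpow (kX η Pk) m x).bind (fun y => η y)) M = 0 := by
    intro m M hM h0
    have hw : Measurable fun y => η y M := Kernel.measurable_coe η hM
    have h1 : ∫⁻ x, ∫⁻ y, η y M ∂(kpow (kX η Pk) m x) ∂ν = 0 := by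
      rw [lintegral_kpow (kX η Pk) ν hKXinv m hw,
        ← Measure.bind_apply hM (Kernel.measurable η).aemeasurable, hbindη, h0]
    have hmeas : Measurable fun x => ∫⁻ y, η y M ∂(kpow (kX η Pk) m x) :=
      (hw.comp measurable_snd).lintegral_kernel_prod_right' (κ := kpow (kX η Pk) m)
    filter_upwards [(lintegral_eq_zero_iff hmeas).mp h1] with x hx
    rw [Measure.bind_apply hM (Kernel.measurable η).aemeasurable]
    exact hx
  have aeX : ∀ (F1 F2 : X → ℝ), F1 =ᵐ[ν] F2 → ∀ m : ℕ,
      (∀ᵐ x ∂ν, ∫ y, F1 y ∂(kpow (kX η Pk) m x) = ∫ y, F2 y ∂(kpow (kX η Pk) m x)) := by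
    intro F1 F2 h12 m
    have hMm : MeasurableSet (toMeasurable ν {x | F1 x ≠ F2 x}) :=
      measurableSet_toMeasurable _ _
    have hM0 : ν (toMeasurable ν {x | F1 x ≠ F2 x}) = 0 := by
      rw [measure_toMeasurable]
      exact ae_iff.mp h12
    filter_upwards [kpow_null (kX η Pk) ν hKXinv m hMm hM0] with x hx
    refine integral_congr_ae (ae_iff.mpr ?_)
    exact measure_mono_null (fun y hy => subset_toMeasurable ν _ hy) hx
  have Xtrans : ∀ (F1 F2 : X → ℝ), F1 =ᵐ[ν] F2 → ∀ m : ℕ,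
      ∫ x, F1 x * ∫ y, F1 y ∂(kpow (kX η Pk) m x) ∂ν
        = ∫ x, F2 x * ∫ y, F2 y ∂(kpow (kX η Pk) m x) ∂ν := by
    intro F1 F2 h12 m
    refine integral_congr_ae ?_
    filter_upwards [h12, aeX F1 F2 h12 m] with x h1 h2
    rw [h1, h2]
  have Ptrans : ∀ (f1 f2 : Θ → ℝ), f1 =ᵐ[μΘ] f2 → ∀ m : ℕ,
      ∫ p, f1 p.1 * ∫ q, f1 q.1 ∂(kpow (kF η Pk) (m + 1) p) ∂π
        = ∫ p, f2 p.1 * ∫ q, f2 q.1 ∂(kpow (kF η Pk) (m + 1) p) ∂π := by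
    intro f1 f2 h12 m
    have hNm : MeasurableSet (toMeasurable μΘ {a | f1 a ≠ f2 a}) :=
      measurableSet_toMeasurable _ _
    have hN0 : μΘ (toMeasurable μΘ {a | f1 a ≠ f2 a}) = 0 := by
      rw [measure_toMeasurable]; exact ae_iff.mp h12
    have hsub : {a | f1 a ≠ f2 a} ⊆ toMeasurable μΘ {a | f1 a ≠ f2 a} :=
      subset_toMeasurable _ _
    have h1 : ∀ᵐ p ∂π, f1 p.1 = f2 p.1 := by
      refine ae_iff.mpr (measure_mono_null
        (t := Prod.fst ⁻¹' (toMeasurable μΘ {a | f1 a ≠ f2 a}))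
        (fun p hp => hsub hp) ?_)
      rw [← Measure.fst_apply hNm, ← hμΘ]
      exact hN0
    have h2 : ∀ᵐ p ∂π, ∫ q, f1 q.1 ∂(kpow (kF η Pk) (m + 1) p)
        = ∫ q, f2 q.1 ∂(kpow (kF η Pk) (m + 1) p) := by
      have hx : ∀ᵐ x ∂ν, ((kpow (kX η Pk) m x).bind (fun y => kPsi η Pk y))
          (Prod.fst ⁻¹' (toMeasurable μΘ {a | f1 a ≠ f2 a})) = 0 := by
        have hA : ∀ x : X, ((kpow (kX η Pk) m x).bind (fun y => kPsi η Pk y))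
            (Prod.fst ⁻¹' (toMeasurable μΘ {a | f1 a ≠ f2 a}))
            = ((kpow (kX η Pk) m x).bind (fun y => η y))
              (toMeasurable μΘ {a | f1 a ≠ f2 a}) := by
          intro x
          rw [← Measure.map_apply measurable_fst hNm,
            map_bind _ (Kernel.measurable (kPsi η Pk)) measurable_fst,
            show (fun y : X => (kPsi η Pk y).map Prod.fst) = fun y : X => η y from
              funext fun y => kPsi_map_fst η Pk y]
        filter_upwards [ηkNull m hNm hN0] with x hx
        rw [hA x]
        exact hx
      filter_upwards [haesnd hx] with p hp
      refine integral_congr_ae (ae_iff.mpr ?_)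
      rw [kF_pow η Pk m p]
      exact measure_mono_null (fun q hq => hsub hq) hp
    refine integral_congr_ae ?_
    filter_upwards [h1, h2] with p hp1 hp2
    rw [hp1, hp2]
  have part1u : ∀ (u : Θ → ℝ), StronglyMeasurable u → MemLp u 2 μΘ → ∀ m : ℕ,
      ∫ p, u p.1 * ∫ q, u q.1 ∂(kpow (kF η Pk) (m + 1) p) ∂π
        = ∫ x, (∫ θ, u θ ∂η x) * ∫ y, (∫ θ, u θ ∂η y) ∂(kpow (kX η Pk) m x) ∂ν := by
    intro u hus hu2 m
    have hum : Measurable u := hus.measurable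
    have hubars : StronglyMeasurable fun x => ∫ θ, u θ ∂η x :=
      (hus.comp_measurable measurable_snd).integral_kernel_prod_right' (κ := η)
    have hubar2 : MemLp (fun x => ∫ θ, u θ ∂η x) 2 ν :=
      memL2_kernel η ν μΘ hbindη hus hu2
    have hk_sm : StronglyMeasurable fun x => ∫ y, (∫ θ, u θ ∂η y) ∂(kpow (kX η Pk) m x) :=
      (hubars.comp_measurable measurable_snd).integral_kernel_prod_right'
        (κ := kpow (kX η Pk) m)
    have hk2 : MemLp (fun x => ∫ y, (∫ θ, u θ ∂η y) ∂(kpow (kX η Pk) m x)) 2 ν :=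
      memL2_kernel (kpow (kX η Pk) m) ν ν (bind_kpow _ ν hKXinv m) hubars hubar2
    have stepA : ∀ x : X, ((kpow (kX η Pk) m x).bind (fun y => kPsi η Pk y)).map Prod.fst
        = (kpow (kX η Pk) m x).bind (fun y => η y) := by
      intro x
      rw [map_bind _ (Kernel.measurable (kPsi η Pk)) measurable_fst,
        show (fun y : X => (kPsi η Pk y).map Prod.fst) = fun y : X => η y from
          funext fun y => kPsi_map_fst η Pk y]
    have stepB : ∀ x : X, ∫ q, u q.1 ∂((kpow (kX η Pk) m x).bind (fun y => kPsi η Pk y))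
        = ∫ t, u t ∂((kpow (kX η Pk) m x).bind (fun y => η y)) := by
      intro x
      rw [← stepA x, integral_map measurable_fst.aemeasurable hus.aestronglyMeasurable]
    have hwin : Measurable fun y => ∫⁻ θ, (‖u θ‖₊ : ℝ≥0∞) ∂η y :=
      (hum.nnnorm.coe_nnreal_ennreal.comp measurable_snd).lintegral_kernel_prod_right' (κ := η)
    have hfin : ∫⁻ x, ∫⁻ y, (∫⁻ θ, (‖u θ‖₊ : ℝ≥0∞) ∂η y) ∂(kpow (kX η Pk) m x) ∂ν < ⊤ := by
      rw [lintegral_kpow (kX η Pk) ν hKXinv m hwin,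
        ← Measure.lintegral_bind (Kernel.measurable η).aemeasurable hum.nnnorm.coe_nnreal_ennreal.aemeasurable, hbindη]
      exact (hu2.integrable one_le_two).2
    have stepC : ∀ᵐ x ∂ν, Integrable u ((kpow (kX η Pk) m x).bind (fun y => η y)) := by
      have hmeas : Measurable fun x =>
          ∫⁻ y, (∫⁻ θ, (‖u θ‖₊ : ℝ≥0∞) ∂η y) ∂(kpow (kX η Pk) m x) :=
        (hwin.comp measurable_snd).lintegral_kernel_prod_right' (κ := kpow (kX η Pk) m)
      filter_upwards [ae_lt_top hmeas hfin.ne] with x hx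
      refine ⟨hus.aestronglyMeasurable, ?_⟩
      have heq : ∫⁻ t, (‖u t‖₊ : ℝ≥0∞) ∂((kpow (kX η Pk) m x).bind (fun y => η y))
          = ∫⁻ y, (∫⁻ θ, (‖u θ‖₊ : ℝ≥0∞) ∂η y) ∂(kpow (kX η Pk) m x) :=
        Measure.lintegral_bind (Kernel.measurable η).aemeasurable hum.nnnorm.coe_nnreal_ennreal.aemeasurable
      show ∫⁻ t, (‖u t‖₊ : ℝ≥0∞) ∂((kpow (kX η Pk) m x).bind (fun y => η y)) < ⊤
      rw [heq]
      exact hx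
    have stepD : ∀ᵐ x ∂ν, ∫ t, u t ∂((kpow (kX η Pk) m x).bind (fun y => η y))
        = ∫ y, (∫ θ, u θ ∂η y) ∂(kpow (kX η Pk) m x) := by
      filter_upwards [stepC] with x hx
      exact integral_bind (kpow (kX η Pk) m x) η hus hx
    have key1 : ∀ᵐ p ∂π, ∫ q, u q.1 ∂(kpow (kF η Pk) (m + 1) p)
        = ∫ y, (∫ θ, u θ ∂η y) ∂(kpow (kX η Pk) m p.2) := by
      have hae : ∀ᵐ x ∂ν, ∫ q, u q.1 ∂((kpow (kX η Pk) m x).bind (fun y => kPsi η Pk y))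
          = ∫ y, (∫ θ, u θ ∂η y) ∂(kpow (kX η Pk) m x) := by
        filter_upwards [stepD] with x hx
        rw [stepB x, hx]
      filter_upwards [haesnd hae] with p hp
      rw [kF_pow η Pk m p]
      exact hp
    have hFm : StronglyMeasurable fun p : Θ × X =>
        u p.1 * ∫ y, (∫ θ, u θ ∂η y) ∂(kpow (kX η Pk) m p.2) :=
      (hus.comp_measurable measurable_fst).mul (hk_sm.comp_measurable measurable_snd)
    have hLHS : ∫ p, u p.1 * ∫ q, u q.1 ∂(kpow (kF η Pk) (m + 1) p) ∂π
        = ∫ p, u p.1 * ∫ y, (∫ θ, u θ ∂η y) ∂(kpow (kX η Pk) m p.2) ∂π := by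
      refine integral_congr_ae ?_
      filter_upwards [key1] with p hp
      rw [hp]
    rw [hLHS]
    have hmp_snd : MeasurePreserving Prod.snd (ν ⊗ₘ η) μΘ :=
      ⟨measurable_snd, (bind_eq_map_snd ν η).symm.trans hbindη⟩
    have hmp_fst : MeasurePreserving Prod.fst (ν ⊗ₘ η) ν :=
      ⟨measurable_fst, Measure.fst_compProd ν η⟩
    have hint : Integrable (fun z : X × Θ =>
        u z.2 * ∫ y, (∫ θ, u θ ∂η y) ∂(kpow (kX η Pk) m z.1)) (ν ⊗ₘ η) :=
      integrable_mul_of_memL2 (hu2.comp_measurePreserving hmp_snd)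
        (hk2.comp_measurePreserving hmp_fst)
    calc ∫ p, u p.1 * ∫ y, (∫ θ, u θ ∂η y) ∂(kpow (kX η Pk) m p.2) ∂π
        = ∫ z : X × Θ, u z.2 * ∫ y, (∫ θ, u θ ∂η y) ∂(kpow (kX η Pk) m z.1) ∂(ν ⊗ₘ η) := by
          conv_lhs => rw [hdis₂]
          rw [integral_map measurable_swap.aemeasurable hFm.aestronglyMeasurable]
          rfl
      _ = ∫ x, ∫ θ, u θ * ∫ y, (∫ θ', u θ' ∂η y) ∂(kpow (kX η Pk) m x) ∂η x ∂ν :=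
          Measure.integral_compProd hint
      _ = ∫ x, (∫ θ, u θ ∂η x) * ∫ y, (∫ θ, u θ ∂η y) ∂(kpow (kX η Pk) m x) ∂ν := by
          refine integral_congr_ae (Filter.Eventually.of_forall fun x => ?_)
          exact integral_mul_const _ _
  obtain ⟨g, hgsm, hfg⟩ := hf.1
  have hg2 : MemLp g 2 μΘ := hf.ae_eq hfg
  have hgi : Integrable g μΘ := hg2.integrable one_le_two
  have hfgbar : ∀ᵐ x ∂ν, (∫ θ, f θ ∂η x) = ∫ θ, g θ ∂η x := by
    have hNm : MeasurableSet (toMeasurable μΘ {a | f a ≠ g a}) :=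
      measurableSet_toMeasurable _ _
    have hN0 : μΘ (toMeasurable μΘ {a | f a ≠ g a}) = 0 := by
      rw [measure_toMeasurable]; exact ae_iff.mp hfg
    filter_upwards [ηNull hNm hN0] with x hx
    exact integral_congr_ae (ae_iff.mpr
      (measure_mono_null (fun θ hθ => subset_toMeasurable _ _ hθ) hx))
  constructor
  · intro k hk1
    obtain ⟨m, rfl⟩ : ∃ m, k = m + 1 := ⟨k - 1, (Nat.succ_pred_eq_of_pos hk1).symm⟩
    simp only [Nat.add_sub_cancel, hIF, hIX]
    calc ∫ p, f p.1 * ∫ q, f q.1 ∂(kpow (kF η Pk) (m + 1) p) ∂π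
        = ∫ p, g p.1 * ∫ q, g q.1 ∂(kpow (kF η Pk) (m + 1) p) ∂π := Ptrans f g hfg m
      _ = ∫ x, (∫ θ, g θ ∂η x) * ∫ y, (∫ θ, g θ ∂η y) ∂(kpow (kX η Pk) m x) ∂ν :=
          part1u g hgsm hg2 m
      _ = ∫ x, (∫ θ, f θ ∂η x) * ∫ y, (∫ θ, f θ ∂η y) ∂(kpow (kX η Pk) m x) ∂ν :=
          (Xtrans _ _ hfgbar m).symm
  · intro hsum
    simp only [hIF, hIX] at hsum ⊢
    set c := ∫ t, f t ∂μΘ with hcd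
    set cb := ∫ t, (∫ θ, f θ ∂η t) ∂ν with hcbd
    have hcg : c = ∫ t, g t ∂μΘ := integral_congr_ae hfg
    have hgcsm : StronglyMeasurable fun θ => g θ - c := hgsm.sub stronglyMeasurable_const
    have hgc2 : MemLp (fun θ => g θ - c) 2 μΘ := hg2.sub (memLp_const c)
    have hfc : (fun θ => f θ - c) =ᵐ[μΘ] (fun θ => g θ - c) := by
      filter_upwards [hfg] with θ h
      rw [h]
    have haeintg : ∀ᵐ x ∂ν, Integrable g (η x) :=
      ae_integrable_kernel η ν μΘ hbindη hgsm hgi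
    have hcb : cb = c := by
      rw [hcbd]
      calc ∫ t, (∫ θ, f θ ∂η t) ∂ν = ∫ t, (∫ θ, g θ ∂η t) ∂ν := integral_congr_ae hfgbar
        _ = ∫ t, g t ∂μΘ := by
            rw [← hbindη]
            exact (integral_bind ν η hgsm (by rw [hbindη]; exact hgi)).symm
        _ = c := hcg.symm
    have hgcbarsm : StronglyMeasurable fun x => ∫ θ, (g θ - c) ∂η x :=
      (hgcsm.comp_measurable measurable_snd).integral_kernel_prod_right' (κ := η)
    have hF1 : (fun x => (∫ θ, f θ ∂η x) - cb) =ᵐ[ν] (fun x => ∫ θ, (g θ - c) ∂η x) := by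
      filter_upwards [hfgbar, haeintg] with x h1 h2
      show (∫ θ, f θ ∂η x) - cb = ∫ θ, (g θ - c) ∂η x
      rw [integral_sub h2 (integrable_const c), integral_const, h1, hcb]
      simp
    have hB : ∀ k : ℕ,
        ∫ p, (f p.1 - c) * ∫ q, (f q.1 - c) ∂(kpow (kF η Pk) (k + 1) p) ∂π
          = ∫ x, (∫ θ, (g θ - c) ∂η x) *
              ∫ y, (∫ θ, (g θ - c) ∂η y) ∂(kpow (kX η Pk) k x) ∂ν := fun k =>
      (Ptrans _ _ hfc k).trans (part1u _ hgcsm hgc2 k)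
    have hA : ∀ k : ℕ,
        ∫ x, ((∫ θ, f θ ∂η x) - cb) *
            ∫ y, ((∫ θ, f θ ∂η y) - cb) ∂(kpow (kX η Pk) (k + 1) x) ∂ν
          = ∫ x, (∫ θ, (g θ - c) ∂η x) *
              ∫ y, (∫ θ, (g θ - c) ∂η y) ∂(kpow (kX η Pk) (k + 1) x) ∂ν := fun k =>
      Xtrans _ _ hF1 (k + 1)
    have hsum2 : Summable (fun k : ℕ => ∫ x, (∫ θ, (g θ - c) ∂η x) *
        ∫ y, (∫ θ, (g θ - c) ∂η y) ∂(kpow (kX η Pk) (k + 1) x) ∂ν) := by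
      simp only [hA] at hsum
      exact hsum
    have hsumX : Summable (fun k : ℕ => ∫ x, (∫ θ, (g θ - c) ∂η x) *
        ∫ y, (∫ θ, (g θ - c) ∂η y) ∂(kpow (kX η Pk) k x) ∂ν) :=
      (summable_nat_add_iff 1).mp hsum2
    have hX0 : ∫ x, (∫ θ, (g θ - c) ∂η x) *
        ∫ y, (∫ θ, (g θ - c) ∂η y) ∂(kpow (kX η Pk) 0 x) ∂ν
          = varF ν (fun x => ∫ θ, f θ ∂η x) := by
      have hdir : ∀ x : X, ∫ y, (∫ θ, (g θ - c) ∂η y) ∂(kpow (kX η Pk) 0 x)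
          = ∫ θ, (g θ - c) ∂η x := by
        intro x
        rw [show kpow (kX η Pk) 0 = Kernel.id from rfl, Kernel.id_apply]
        exact integral_dirac' _ x hgcbarsm
      simp only [hdir]
      have hgbar2 : MemLp (fun x => ∫ θ, g θ ∂η x) 2 ν := memL2_kernel η ν μΘ hbindη hgsm hg2
      have hgbari : Integrable (fun x => ∫ θ, g θ ∂η x) ν := hgbar2.integrable one_le_two
      have hgbarsq : Integrable (fun x => (∫ θ, g θ ∂η x) ^ 2) ν := hgbar2.integrable_sq
      have hgbarmean : ∫ x, (∫ θ, g θ ∂η x) ∂ν = c := by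
        rw [(integral_congr_ae hfgbar).symm, ← hcbd, hcb]
      have e3 : ∫ x, (∫ θ, (g θ - c) ∂η x) * (∫ θ, (g θ - c) ∂η x) ∂ν
          = ∫ x, ((∫ θ, g θ ∂η x) - c) ^ 2 ∂ν := by
        refine integral_congr_ae ?_
        filter_upwards [haeintg] with x h2
        rw [integral_sub h2 (integrable_const c), integral_const]
        simp [sq]
      have e4 : ∫ x, ((∫ θ, g θ ∂η x) - c) ^ 2 ∂ν = ∫ x, (∫ θ, g θ ∂η x) ^ 2 ∂ν - c ^ 2 := by
        have hBint : Integrable (fun x => 2 * c * (∫ θ, g θ ∂η x)) ν := hgbari.const_mul _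
        have hAint : Integrable (fun x => (∫ θ, g θ ∂η x) ^ 2 - 2 * c * (∫ θ, g θ ∂η x)) ν :=
          hgbarsq.sub hBint
        have e1 : ∀ x : X, ((∫ θ, g θ ∂η x) - c) ^ 2
            = (∫ θ, g θ ∂η x) ^ 2 - 2 * c * (∫ θ, g θ ∂η x) + c ^ 2 := fun x => by ring
        rw [integral_congr_ae (Filter.Eventually.of_forall e1),
          integral_add hAint (integrable_const _), integral_sub hgbarsq hBint,
          integral_const_mul, hgbarmean, integral_const]
        simp
        ring
      have e5 : varF ν (fun x => ∫ θ, f θ ∂η x)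
          = ∫ x, (∫ θ, g θ ∂η x) ^ 2 ∂ν - c ^ 2 := by
        rw [varF]
        have e6 : ∫ x, (∫ θ, f θ ∂η x) ^ 2 ∂ν = ∫ x, (∫ θ, g θ ∂η x) ^ 2 ∂ν := by
          refine integral_congr_ae ?_
          filter_upwards [hfgbar] with x h
          rw [h]
        have e7 : ∫ x, (∫ θ, f θ ∂η x) ∂ν = c := by rw [← hcbd, hcb]
        rw [e6, e7]
      rw [e3, e4, e5]
    have hts : ∑' k : ℕ, ∫ p, (f p.1 - c) * ∫ q, (f q.1 - c) ∂(kpow (kF η Pk) (k + 1) p) ∂π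
        = varF ν (fun x => ∫ θ, f θ ∂η x)
          + ∑' k : ℕ, ∫ x, ((∫ θ, f θ ∂η x) - cb) *
              ∫ y, ((∫ θ, f θ ∂η y) - cb) ∂(kpow (kX η Pk) (k + 1) x) ∂ν := by
      rw [tsum_congr hB, hsumX.tsum_eq_zero_add, hX0, tsum_congr hA]
    constructor
    · simp only [hB]
      exact hsumX
    · rw [hts]
      ring
end

section
/- Let {μ_x}_{x∈X} be a family of finite measures on (ℝ^d, B(ℝ^d)) such that x ↦ μ_x(A) is a measurable mapping for each A ∈ B(ℝ^d), and let ξ be a probability measure on the measurable space (X, B(X)). Then for any ε > 0 there exists a set A ∈ B(X) with ξ(A) ≥ 1 − ε such that the family {μ_x}_{x∈A} is tight, i.e. for every δ > 0 there exists r < ∞ such that μ_x({y ∈ ℝ^d : |y| > r}) ≤ δ for all x ∈ A. -/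
open MeasureTheory Filter
open scoped ENNReal Topology

/-- For a measurable family `{μ_x}` of finite measures on `ℝ^d` and a probability measure `ξ`
on `X`, for every `ε > 0` there is a measurable set `A` with `ξ(A) ≥ 1 - ε` on which the
family `{μ_x}_{x ∈ A}` is tight. -/
theorem tight_on_large_set (d : ℕ) {X : Type*} [MeasurableSpace X]
    (μ : X → Measure (EuclideanSpace ℝ (Fin d)))
    (hfin : ∀ x, IsFiniteMeasure (μ x))
    (hmeas : ∀ A : Set (EuclideanSpace ℝ (Fin d)), MeasurableSet A →
      Measurable fun x => μ x A)
    (ξ : Measure X) [IsProbabilityMeasure ξ]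
    (ε : ℝ) (hε : 0 < ε) :
    ∃ A : Set X, MeasurableSet A ∧ ENNReal.ofReal (1 - ε) ≤ ξ A ∧
      ∀ δ : ℝ, 0 < δ → ∃ r : ℝ, ∀ x ∈ A,
        μ x {y : EuclideanSpace ℝ (Fin d) | r < ‖y‖} ≤ ENNReal.ofReal δ := by
  classical
  set S : ℕ → Set (EuclideanSpace ℝ (Fin d)) := fun m => {y | (m : ℝ) < ‖y‖} with hS
  have hSmeas : ∀ m, MeasurableSet (S m) := fun m =>
    measurableSet_lt measurable_const measurable_norm
  have hSanti : Antitone S := by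
    intro m m' h y hy
    have hy' : (m' : ℝ) < ‖y‖ := hy
    exact lt_of_le_of_lt (show (m:ℝ) ≤ m' by exact_mod_cast h) hy'
  have hSempty : (⋂ m, S m) = ∅ := by
    ext y
    simp only [Set.mem_iInter, Set.mem_empty_iff_false, iff_false, not_forall]
    obtain ⟨m, hm⟩ := exists_nat_gt ‖y‖
    exact ⟨m, by simp [hS, not_lt.mpr hm.le]⟩
  -- continuity from above for each x
  have h1 : ∀ x, Tendsto (fun m => μ x (S m)) atTop (𝓝 0) := by
    intro x
    haveI := hfin x
    have := tendsto_measure_iInter_atTop (μ := μ x)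
      (fun m => (hSmeas m).nullMeasurableSet) hSanti ⟨0, measure_ne_top _ _⟩
    rwa [hSempty, measure_empty] at this
  -- the good sets
  set B : ℕ → ℕ → Set X := fun n m => {x | μ x (S m) ≤ ENNReal.ofReal (1 / (n + 1))} with hB
  have hBmeas : ∀ n m, MeasurableSet (B n m) :=
    fun n m => (hmeas (S m) (hSmeas m)) measurableSet_Iic
  have hBcanti : ∀ n, Antitone fun m => (B n m)ᶜ := by
    intro n m m' h x hx
    simp only [Set.mem_compl_iff, Set.mem_setOf_eq, not_le, hB] at hx ⊢
    exact lt_of_lt_of_le hx (measure_mono (hSanti h))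
  have hBcempty : ∀ n, (⋂ m, (B n m)ᶜ) = ∅ := by
    intro n
    refine Set.eq_empty_iff_forall_notMem.mpr fun x hx => ?_
    have hpos : (0 : ℝ≥0∞) < ENNReal.ofReal (1 / (n + 1)) := by
      rw [ENNReal.ofReal_pos]; positivity
    obtain ⟨m, hm⟩ := ((h1 x).eventually (eventually_lt_nhds hpos)).exists
    exact (Set.mem_iInter.mp hx m) hm.le
  have h2 : ∀ n, Tendsto (fun m => ξ (B n m)ᶜ) atTop (𝓝 0) := by
    intro n
    have := tendsto_measure_iInter_atTop (μ := ξ)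
      (fun m => (hBmeas n m).compl.nullMeasurableSet) (hBcanti n) ⟨0, measure_ne_top _ _⟩
    rwa [hBcempty n, measure_empty] at this
  -- choose indices
  have hchoice : ∀ n : ℕ, ∃ m, ξ (B n m)ᶜ ≤ ENNReal.ofReal ε * 2⁻¹ ^ (n + 1) := by
    intro n
    have hpos : (0 : ℝ≥0∞) < ENNReal.ofReal ε * 2⁻¹ ^ (n + 1) := by
      apply ENNReal.mul_pos
      · simp [ENNReal.ofReal_pos, hε, hε.ne']
      · exact pow_ne_zero _ (by norm_num)
    obtain ⟨m, hm⟩ := ((h2 n).eventually (eventually_le_nhds hpos)).exists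
    exact ⟨m, hm⟩
  choose m hm using hchoice
  refine ⟨⋂ n, B n (m n), MeasurableSet.iInter fun n => hBmeas n (m n), ?_, ?_⟩
  · -- measure bound
    have hcompl : ξ (⋂ n, B n (m n))ᶜ ≤ ENNReal.ofReal ε := by
      rw [Set.compl_iInter]
      refine (measure_iUnion_le _).trans ?_
      calc ∑' n, ξ (B n (m n))ᶜ ≤ ∑' n : ℕ, ENNReal.ofReal ε * 2⁻¹ ^ (n + 1) :=
            ENNReal.tsum_le_tsum fun n => hm n
        _ = ENNReal.ofReal ε * (2⁻¹ * (1 - 2⁻¹)⁻¹) := by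
            rw [ENNReal.tsum_mul_left, ENNReal.tsum_geometric_add_one]
        _ = ENNReal.ofReal ε := by
            rw [ENNReal.one_sub_inv_two, inv_inv,
              ENNReal.inv_mul_cancel (by norm_num) (by norm_num), mul_one]
    have hA : ξ (⋂ n, B n (m n)) = 1 - ξ (⋂ n, B n (m n))ᶜ := by
      have := prob_compl_eq_one_sub (μ := ξ)
        (MeasurableSet.iInter fun n => hBmeas n (m n)).compl
      rwa [compl_compl] at this
    rw [hA]
    calc ENNReal.ofReal (1 - ε) = 1 - ENNReal.ofReal ε := by
          rw [ENNReal.ofReal_sub _ hε.le, ENNReal.ofReal_one]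
      _ ≤ 1 - ξ (⋂ n, B n (m n))ᶜ := tsub_le_tsub_left hcompl 1
  · -- tightness
    intro δ hδ
    obtain ⟨n, hn⟩ := exists_nat_gt (1 / δ)
    refine ⟨(m n : ℝ), fun x hx => ?_⟩
    have hxB : x ∈ B n (m n) := Set.mem_iInter.mp hx n
    refine le_trans hxB (ENNReal.ofReal_le_ofReal ?_)
    rw [div_le_iff₀ (by positivity)]
    rw [div_lt_iff₀ hδ] at hn
    nlinarith
end
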